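/- arXiv:1904.00847 — 6 statements merged into one kernel-verified Lean document; each statement's English description precedes it below -/
import Mathlib

section
/- Let σ₀ > 0, δ ∈ (0, π/2) and s ∈ 𝒮, and set ζ := conj(s)/|s| (so |ζ| = 1). Let Ω ⊆ ℝ^d be open and let u : Ω → ℂ be differentiable with A := ∫_Ω ‖Du(x)‖² dx < ∞ and B := ∫_Ω |u(x)|² dx < ∞, where Du denotes the (Fréchet) derivative of u. Then Re( ζ · ( (A : ℂ) + s² · (B : ℂ) ) ) ≥ sin(δ) · ( A + |s|² · B ). That is, the sesquilinear form a_s(u,v) := (∇u, ∇v)_{L²(Ω)} + s²(u,v)_{L²(Ω)} associated to −Δ + s² satisfies the ellipticity estimate Re(ζ a_s(u,u)) ≥ sin(δ)‖u‖²_{|s|,1,Ω}. -/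
open Real Complex MeasureTheory

/-- Ellipticity of the sesquilinear form `a_s(u,u) = ‖∇u‖² + s² ‖u‖²` associated to `-Δ + s²`:
for `s` in the sector `𝒮` and `ζ = conj(s)/|s|`, one has
`Re(ζ (A + s² B)) ≥ sin δ (A + |s|² B)` where `A = ∫_Ω ‖Du‖²` and `B = ∫_Ω |u|²`. -/
theorem elliptic_form_sector (σ₀ δ : ℝ) (hσ₀ : 0 < σ₀) (hδ : δ ∈ Set.Ioo 0 (π / 2))
    (s : ℂ) (hs_re : σ₀ < s.re)
    (harg : Complex.arg s ∈ Set.Ioo (-(π / 2) + δ) (π / 2 - δ))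
    (ζ : ℂ) (hζ : ζ = (starRingEnd ℂ) s / (‖s‖ : ℂ))
    (d : ℕ) (Ω : Set (EuclideanSpace ℝ (Fin d))) (hΩ : IsOpen Ω)
    (u : EuclideanSpace ℝ (Fin d) → ℂ) (hu : DifferentiableOn ℝ u Ω)
    (A B : ℝ)
    (hA : A = ∫ x in Ω, ‖fderivWithin ℝ u Ω x‖ ^ 2)
    (hB : B = ∫ x in Ω, ‖u x‖ ^ 2)
    (hAint : IntegrableOn (fun x => ‖fderivWithin ℝ u Ω x‖ ^ 2) Ω)
    (hBint : IntegrableOn (fun x => ‖u x‖ ^ 2) Ω) :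
    Real.sin δ * (A + ‖s‖ ^ 2 * B) ≤ (ζ * ((A : ℂ) + s ^ 2 * (B : ℂ))).re := by
  have hs0 : s ≠ 0 := by
    intro h; rw [h] at hs_re; simp at hs_re; linarith
  have habs : (0:ℝ) < ‖s‖ := norm_pos_iff.mpr hs0
  have hA0 : 0 ≤ A := by
    rw [hA]; exact integral_nonneg fun x => by positivity
  have hB0 : 0 ≤ B := by
    rw [hB]; exact integral_nonneg fun x => by positivity
  have hsum : 0 ≤ A + ‖s‖ ^ 2 * B := by positivity
  have habs2 : (‖s‖ : ℝ) ^ 2 = s.re ^ 2 + s.im ^ 2 := by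
    rw [Complex.sq_norm, Complex.normSq_apply]; ring
  have key : (ζ * ((A : ℂ) + s ^ 2 * (B : ℂ))).re
      = (s.re / ‖s‖) * (A + ‖s‖ ^ 2 * B) := by
    subst hζ
    have : ((starRingEnd ℂ) s / (‖s‖ : ℂ)) * ((A : ℂ) + s ^ 2 * (B : ℂ))
        = (((s.re * A + (s.re ^ 2 + s.im ^ 2) * s.re * B) / ‖s‖ : ℝ) : ℂ)
          + (((- s.im * A + (s.re ^ 2 + s.im ^ 2) * s.im * B) / ‖s‖ : ℝ) : ℂ) * Complex.I := by
      have hre : s = (s.re : ℂ) + (s.im : ℂ) * Complex.I := (Complex.re_add_im s).symm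
      rw [Complex.ext_iff]
      field_simp
      constructor <;>
        simp [Complex.mul_re, Complex.mul_im, Complex.add_re, Complex.add_im,
          Complex.conj_re, Complex.conj_im, Complex.div_re, Complex.div_im,
          Complex.normSq_apply, pow_two] <;> ring
    rw [this]
    simp only [Complex.add_re, Complex.ofReal_re, Complex.mul_re, Complex.I_re,
      Complex.I_im, Complex.ofReal_im]
    rw [habs2]
    ring
  rw [key]
  have hcos : Real.sin δ ≤ s.re / ‖s‖ := by
    rw [← Complex.cos_arg hs0, ← Real.cos_pi_div_two_sub δ]
    rw [← Real.cos_abs (Complex.arg s)]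
    apply Real.cos_le_cos_of_nonneg_of_le_pi (abs_nonneg _)
    · linarith [Real.pi_pos, hδ.1]
    · rw [abs_le]
      obtain ⟨h1, h2⟩ := harg
      constructor <;> linarith
  exact mul_le_mul_of_nonneg_right hcos hsum
end

section
/- Let σ₀ > 0, δ ∈ (0, π/2) and s ∈ 𝒮. Let 𝒪 ⊆ ℝ^{d−1} be open and let g : 𝒪 → ℂ be continuously differentiable with ∫_𝒪 |g|² dx < ∞ and ∫_𝒪 ‖∇g‖² dx < ∞. Define the boundary layer function û(x̂, ρ) := e^{−sρ} g(x̂) on 𝒪 × (0, ∞). Then there exists a constant C depending only on δ (independent of s, g, 𝒪) such that ∫_{𝒪×(0,∞)} |∂_ρ û|² + ∫_{𝒪×(0,∞)} ‖∇_x̂ ∂_ρ û‖² + ∫_{𝒪×(0,∞)} ρ² |∂_ρ² û|² ≤ C · (|s|² / Re(s)) · ( ∫_𝒪 |g|² + ∫_𝒪 ‖∇g‖² ). -/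
open Real Complex MeasureTheory

lemma bl_exp_integral {a : ℝ} (ha : 0 < a) :
    ∫ ρ in Set.Ioi (0:ℝ), Real.exp (-(a*ρ)) = 1/a := by
  have h := integral_rpow_mul_exp_neg_mul_Ioi (a := 1) (r := a) one_pos ha
  simpa using h

lemma bl_sq_exp_integral {a : ℝ} (ha : 0 < a) :
    ∫ ρ in Set.Ioi (0:ℝ), ρ^2 * Real.exp (-(a*ρ)) = 2/a^3 := by
  have h := integral_rpow_mul_exp_neg_mul_Ioi (a := 3) (r := a) (by norm_num) ha
  rw [show ∫ ρ in Set.Ioi (0:ℝ), ρ^2 * Real.exp (-(a*ρ))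
      = ∫ t in Set.Ioi (0:ℝ), t ^ ((3:ℝ)-1) * Real.exp (-(a*t)) from
    setIntegral_congr_fun measurableSet_Ioi (fun t ht => by
      rw [show ((3:ℝ)-1) = ((2:ℕ):ℝ) by norm_num, Real.rpow_natCast]), h,
    show Real.Gamma 3 = 2 by
      rw [show (3:ℝ) = (2:ℕ)+1 by norm_num, Real.Gamma_nat_eq_factorial]; norm_num,
    show ((3:ℝ)) = ((3:ℕ):ℝ) by norm_num, Real.rpow_natCast]
  field_simp

set_option maxHeartbeats 1000000 in
/-- Weighted `L²` estimates for the `ρ`-derivatives of the boundary layer function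
`û(x̂,ρ) = e^{-sρ} g(x̂)`: there is a constant `C` depending only on `δ` such that for all
`s` in the sector `𝒮` (any `σ₀ > 0`),
`∫ |∂_ρ û|² + ∫ ‖∇_x̂ ∂_ρ û‖² + ∫ ρ² |∂_ρ² û|² ≤ C (|s|²/Re s) (∫ |g|² + ∫ ‖∇g‖²)`. -/
theorem boundary_layer_rho_derivative_estimates (δ : ℝ) (hδ : δ ∈ Set.Ioo 0 (π / 2)) :
    ∃ C : ℝ, 0 < C ∧
      ∀ (σ₀ : ℝ), 0 < σ₀ →
      ∀ (s : ℂ), σ₀ < s.re →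
        Complex.arg s ∈ Set.Ioo (-(π / 2) + δ) (π / 2 - δ) →
      ∀ (d : ℕ) (𝒪 : Set (EuclideanSpace ℝ (Fin (d - 1)))), IsOpen 𝒪 →
      ∀ (g : EuclideanSpace ℝ (Fin (d - 1)) → ℂ), ContDiffOn ℝ 1 g 𝒪 →
        IntegrableOn (fun x => ‖g x‖ ^ 2) 𝒪 →
        IntegrableOn (fun x => ‖fderivWithin ℝ g 𝒪 x‖ ^ 2) 𝒪 →
      (∫ p in 𝒪 ×ˢ Set.Ioi (0 : ℝ),
          ‖s * Complex.exp (-s * p.2) * g p.1‖ ^ 2) +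
        (∫ p in 𝒪 ×ˢ Set.Ioi (0 : ℝ),
          ‖s * Complex.exp (-s * p.2)‖ ^ 2 * ‖fderivWithin ℝ g 𝒪 p.1‖ ^ 2) +
        (∫ p in 𝒪 ×ˢ Set.Ioi (0 : ℝ),
          p.2 ^ 2 * ‖s ^ 2 * Complex.exp (-s * p.2) * g p.1‖ ^ 2) ≤
      C * (‖s‖ ^ 2 / s.re) *
        ((∫ x in 𝒪, ‖g x‖ ^ 2) + ∫ x in 𝒪, ‖fderivWithin ℝ g 𝒪 x‖ ^ 2) := by
  have hsin : 0 < Real.sin δ := Real.sin_pos_of_pos_of_lt_pi hδ.1 (by linarith [hδ.2, Real.pi_pos])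
  refine ⟨1/2 + 1/(4 * Real.sin δ ^ 2), by positivity, ?_⟩
  intro σ₀ hσ₀ s hs hargs d 𝒪 h𝒪 g hg hgint hDgint
  have ha : 0 < s.re := lt_trans hσ₀ hs
  have hs0 : s ≠ 0 := fun h => by simp [h] at ha
  have habs : 0 < ‖s‖ := norm_pos_iff.mpr hs0
  -- sector bound : s.re ≥ |s| * sin δ
  have hsec : ‖s‖ * Real.sin δ ≤ s.re := by
    have hcos : Real.cos (Complex.arg s) = s.re / ‖s‖ := Complex.cos_arg hs0
    have harg1 : |Complex.arg s| ≤ π/2 - δ := by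
      rw [abs_le]; constructor <;> [linarith [hargs.1.le]; linarith [hargs.2.le]]
    have h1 : Real.cos (π/2 - δ) ≤ Real.cos |Complex.arg s| := by
      apply Real.cos_le_cos_of_nonneg_of_le_pi (abs_nonneg _) (by linarith [Real.pi_pos, hδ.1]) harg1
    rw [Real.cos_abs, Real.cos_pi_div_two_sub, hcos] at h1
    calc ‖s‖ * Real.sin δ ≤ ‖s‖ * (s.re / ‖s‖) := by
          exact mul_le_mul_of_nonneg_left h1 habs.le
      _ = s.re := by field_simp
  set a := s.re with ha_def
  set A := ∫ x in 𝒪, ‖g x‖ ^ 2 with hA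
  set B := ∫ x in 𝒪, ‖fderivWithin ℝ g 𝒪 x‖ ^ 2 with hB
  have hA0 : 0 ≤ A := setIntegral_nonneg h𝒪.measurableSet (fun x _ => by positivity)
  have hB0 : 0 ≤ B := setIntegral_nonneg h𝒪.measurableSet (fun x _ => by positivity)
  have h2a : 0 < 2 * a := by linarith
  -- the two one-dimensional integrals
  have hw1 : ∫ ρ in Set.Ioi (0:ℝ), Real.exp (-(2*a*ρ)) = 1/(2*a) := bl_exp_integral h2a
  have hw2 : ∫ ρ in Set.Ioi (0:ℝ), ρ^2 * Real.exp (-(2*a*ρ)) = 2/(2*a)^3 := bl_sq_exp_integral h2a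
  -- pointwise form of |exp(-sρ)|²
  have hexp : ∀ ρ : ℝ, ‖Complex.exp (-s * ρ)‖ ^ 2 = Real.exp (-(2*a*ρ)) := by
    intro ρ
    rw [Complex.norm_exp, ← Real.exp_nat_mul]
    congr 1
    simp [Complex.mul_re]
    ring
  -- rewrite the three product integrals
  rw [MeasureTheory.Measure.volume_eq_prod]
  have prodmul : ∀ (f : EuclideanSpace ℝ (Fin (d - 1)) → ℝ) (h : ℝ → ℝ),
      (∫ p in 𝒪 ×ˢ Set.Ioi (0:ℝ), f p.1 * h p.2
          ∂((volume : Measure (EuclideanSpace ℝ (Fin (d - 1)))).prod (volume : Measure ℝ)))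
        = (∫ x in 𝒪, f x) * ∫ ρ in Set.Ioi (0:ℝ), h ρ := fun f h =>
    setIntegral_prod_mul (μ := (volume : Measure (EuclideanSpace ℝ (Fin (d - 1)))))
      (ν := (volume : Measure ℝ)) f h 𝒪 (Set.Ioi 0)
  have e1 : ∫ p in 𝒪 ×ˢ Set.Ioi (0:ℝ),
      ‖s * Complex.exp (-s * p.2) * g p.1‖ ^ 2
        ∂(volume.prod volume)
      = A * (‖s‖ ^ 2 * (1/(2*a))) := by
    have step := setIntegral_congr_fun (μ := volume.prod volume) (s := 𝒪 ×ˢ Set.Ioi (0:ℝ))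
      (h𝒪.measurableSet.prod measurableSet_Ioi)
      (f := fun p : EuclideanSpace ℝ (Fin (d - 1)) × ℝ =>
        ‖s * Complex.exp (-s * p.2) * g p.1‖ ^ 2)
      (g := fun p : EuclideanSpace ℝ (Fin (d - 1)) × ℝ =>
        (fun x => ‖g x‖ ^ 2) p.1 *
          (fun ρ : ℝ => ‖s‖ ^ 2 * Real.exp (-(2*a*ρ))) p.2)
      (fun p _ => by simp only [norm_mul, mul_pow, hexp]; ring)
    refine step.trans ((prodmul (fun x => ‖g x‖ ^ 2)
      (fun ρ : ℝ => ‖s‖ ^ 2 * Real.exp (-(2*a*ρ)))).trans ?_)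
    rw [MeasureTheory.integral_const_mul, hw1]
  have e2 : ∫ p in 𝒪 ×ˢ Set.Ioi (0:ℝ),
      ‖s * Complex.exp (-s * p.2)‖ ^ 2 * ‖fderivWithin ℝ g 𝒪 p.1‖ ^ 2
        ∂(volume.prod volume)
      = B * (‖s‖ ^ 2 * (1/(2*a))) := by
    have step := setIntegral_congr_fun (μ := volume.prod volume) (s := 𝒪 ×ˢ Set.Ioi (0:ℝ))
      (h𝒪.measurableSet.prod measurableSet_Ioi)
      (f := fun p : EuclideanSpace ℝ (Fin (d - 1)) × ℝ =>
        ‖s * Complex.exp (-s * p.2)‖ ^ 2 * ‖fderivWithin ℝ g 𝒪 p.1‖ ^ 2)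
      (g := fun p : EuclideanSpace ℝ (Fin (d - 1)) × ℝ =>
        (fun x => ‖fderivWithin ℝ g 𝒪 x‖ ^ 2) p.1 *
          (fun ρ : ℝ => ‖s‖ ^ 2 * Real.exp (-(2*a*ρ))) p.2)
      (fun p _ => by simp only [norm_mul, mul_pow, hexp]; ring)
    refine step.trans ((prodmul (fun x => ‖fderivWithin ℝ g 𝒪 x‖ ^ 2)
      (fun ρ : ℝ => ‖s‖ ^ 2 * Real.exp (-(2*a*ρ)))).trans ?_)
    rw [MeasureTheory.integral_const_mul, hw1]
  have e3 : ∫ p in 𝒪 ×ˢ Set.Ioi (0:ℝ),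
      p.2 ^ 2 * ‖s ^ 2 * Complex.exp (-s * p.2) * g p.1‖ ^ 2
        ∂(volume.prod volume)
      = A * (‖s‖ ^ 4 * (2/(2*a)^3)) := by
    have step := setIntegral_congr_fun (μ := volume.prod volume) (s := 𝒪 ×ˢ Set.Ioi (0:ℝ))
      (h𝒪.measurableSet.prod measurableSet_Ioi)
      (f := fun p : EuclideanSpace ℝ (Fin (d - 1)) × ℝ =>
        p.2 ^ 2 * ‖s ^ 2 * Complex.exp (-s * p.2) * g p.1‖ ^ 2)
      (g := fun p : EuclideanSpace ℝ (Fin (d - 1)) × ℝ =>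
        (fun x => ‖g x‖ ^ 2) p.1 *
          (fun ρ : ℝ => ‖s‖ ^ 4 * (ρ^2 * Real.exp (-(2*a*ρ)))) p.2)
      (fun p _ => by simp only [norm_mul, norm_pow, mul_pow, hexp]; ring)
    refine step.trans ((prodmul (fun x => ‖g x‖ ^ 2)
      (fun ρ : ℝ => ‖s‖ ^ 4 * (ρ^2 * Real.exp (-(2*a*ρ))))).trans ?_)
    rw [MeasureTheory.integral_const_mul, hw2]
  rw [e1, e2, e3]
  -- final arithmetic
  set t := ‖s‖ with ht
  have key : t^2 ≤ a^2 / Real.sin δ ^ 2 := by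
    rw [le_div_iff₀ (by positivity)]
    have hsq := mul_le_mul hsec hsec (by positivity) ha.le
    nlinarith [hsq]
  have h1 : A * (t ^ 4 * (2/(2*a)^3)) ≤ 1/(4 * Real.sin δ ^ 2) * (t^2/a) * A := by
    have : t^4 * (2/(2*a)^3) = t^2 * (t^2) / (4*a^3) := by field_simp; ring
    rw [this]
    have h2 : t^2 * t^2 / (4*a^3) ≤ t^2 * (a^2 / Real.sin δ ^2) / (4*a^3) := by
      apply div_le_div_of_nonneg_right _ (by positivity)
      exact mul_le_mul_of_nonneg_left key (by positivity)
    calc A * (t^2 * t^2 / (4*a^3)) ≤ A * (t^2 * (a^2 / Real.sin δ ^2) / (4*a^3)) :=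
          mul_le_mul_of_nonneg_left h2 hA0
      _ = 1/(4 * Real.sin δ ^ 2) * (t^2/a) * A := by field_simp
  have hrest : A * (t ^ 2 * (1/(2*a))) + B * (t ^ 2 * (1/(2*a)))
      ≤ (1/2) * (t^2/a) * (A + B) := by
    have : (1/2) * (t^2/a) * (A + B) = A * (t ^ 2 * (1/(2*a))) + B * (t ^ 2 * (1/(2*a))) := by
      field_simp
    linarith [this.ge]
  have hfin : 1/(4 * Real.sin δ ^ 2) * (t^2/a) * A
      ≤ 1/(4 * Real.sin δ ^ 2) * (t^2/a) * (A + B) := by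
    apply mul_le_mul_of_nonneg_left (by linarith) (by positivity)
  nlinarith [h1, hrest, hfin]
end

section
/- Let σ₀ > 0, δ ∈ (0, π/2), s ∈ 𝒮, ε > 0, ℓ ∈ ℝ and j ∈ ℕ. Let 𝒪 ⊆ ℝ^{d−1} be measurable and let g : 𝒪 → ℂ be measurable with ∫_𝒪 |g|² dx < ∞. Then the j-th ρ-derivative of the boundary layer function û(x̂,ρ) := e^{−sρ} g(x̂) equals (−s)^j e^{−sρ} g(x̂), and there is a constant C = C(ε, ℓ, j, σ₀, δ), independent of s and g, such that ∫_{𝒪×(ε,∞)} |∂_ρ^j û|² d(x̂,ρ) = (|s|^{2j} e^{−2 Re(s) ε} / (2 Re(s))) · ∫_𝒪 |g|² ≤ C · |s|^{−2ℓ} · ∫_𝒪 |g|². -/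
open Real Complex MeasureTheory

private lemma exp_sq_aux (a : ℝ) : Real.exp a ^ 2 = Real.exp (2 * a) := by
  rw [two_mul, Real.exp_add, sq]

private lemma integral_exp_neg_mul_Ioi_aux {b : ℝ} (hb : 0 < b) (a : ℝ) :
    ∫ x in Set.Ioi a, Real.exp (-(b * x)) = Real.exp (-(b * a)) / b := by
  have H : ∀ x ∈ Set.Ici a,
      HasDerivAt (fun x : ℝ => -Real.exp (-(b * x)) / b) (Real.exp (-(b * x))) x := by
    intro x _
    have h1 : HasDerivAt (fun x : ℝ => -(b * x)) (-b) x := by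
      simpa using ((hasDerivAt_id x).const_mul b).fun_neg
    have h2 := ((Real.hasDerivAt_exp (-(b * x))).comp x h1).fun_neg.div_const b
    rw [mul_neg, neg_neg, mul_div_assoc, div_self hb.ne', mul_one] at h2
    exact h2
  have hint : IntegrableOn (fun x : ℝ => Real.exp (-(b * x))) (Set.Ioi a) := by
    simpa [neg_mul] using exp_neg_integrableOn_Ioi a hb
  have htend : Filter.Tendsto (fun x : ℝ => -Real.exp (-(b * x)) / b)
      Filter.atTop (nhds 0) := by
    have h1 : Filter.Tendsto (fun x : ℝ => -(b * x)) Filter.atTop Filter.atBot := by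
      apply Filter.tendsto_neg_atBot_iff.mpr
      exact Filter.Tendsto.const_mul_atTop hb Filter.tendsto_id
    have h2 := (Real.tendsto_exp_atBot.comp h1).neg.div_const b
    simpa using h2
  rw [integral_Ioi_of_hasDerivAt_of_tendsto' H hint htend]
  field_simp
  ring

private lemma iter_deriv_aux (s c : ℂ) (j : ℕ) (ρ : ℝ) :
    iteratedDeriv j (fun t : ℝ => Complex.exp (-s * t) * c) ρ =
      (-s) ^ j * Complex.exp (-s * ρ) * c := by
  induction j generalizing ρ with
  | zero => simp
  | succ j ih =>
    rw [iteratedDeriv_succ, funext ih]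
    have h0 : HasDerivAt (fun t : ℝ => -s * (t : ℂ)) (-s) ρ := by
      simpa using (Complex.ofRealCLM.hasDerivAt (x := ρ)).const_mul (-s)
    have h1 : HasDerivAt (fun t : ℝ => Complex.exp (-s * t))
        (Complex.exp (-s * ρ) * (-s)) ρ := h0.cexp
    have h2 := (h1.const_mul ((-s) ^ j)).mul_const c
    have h3 : (-s) ^ j * (Complex.exp (-s * ρ) * (-s)) * c =
        (-s) ^ (j + 1) * Complex.exp (-s * ρ) * c := by ring
    exact (h3 ▸ h2).deriv

private lemma key_bound_aux {σ₀ c : ℝ} (hσ₀ : 0 < σ₀) (hc : 0 < c) (a : ℝ) :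
    ∀ t : ℝ, σ₀ ≤ t →
      t ^ a * Real.exp (-(c * t)) ≤
        σ₀ ^ (a - (⌈a⌉₊ : ℝ)) * ((⌈a⌉₊.factorial : ℝ) / c ^ ⌈a⌉₊) := by
  intro t ht
  have ht0 : 0 < t := lt_of_lt_of_le hσ₀ ht
  set n : ℕ := ⌈a⌉₊ with hn
  have han : a ≤ (n : ℝ) := Nat.le_ceil a
  have h1 : t ^ a = t ^ (a - (n : ℝ)) * t ^ n := by
    rw [← Real.rpow_natCast t n, ← Real.rpow_add ht0, sub_add_cancel]
  have h2 : t ^ (a - (n : ℝ)) ≤ σ₀ ^ (a - (n : ℝ)) :=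
    Real.rpow_le_rpow_of_nonpos hσ₀ ht (by linarith)
  have h3 : t ^ n * Real.exp (-(c * t)) ≤ (n.factorial : ℝ) / c ^ n := by
    have hct : (0 : ℝ) ≤ c * t := by positivity
    have hpf := Real.pow_div_factorial_le_exp (x := c * t) hct n
    have hfac : (0 : ℝ) < (n.factorial : ℝ) := by positivity
    have h4 : (c * t) ^ n ≤ (n.factorial : ℝ) * Real.exp (c * t) := by
      rw [div_le_iff₀ hfac] at hpf
      linarith [hpf]
    rw [le_div_iff₀ (by positivity : (0:ℝ) < c ^ n)]
    have h5 : t ^ n * Real.exp (-(c * t)) * c ^ n =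
        (c * t) ^ n * Real.exp (-(c * t)) := by rw [mul_pow]; ring
    rw [h5]
    calc (c * t) ^ n * Real.exp (-(c * t))
        ≤ (n.factorial : ℝ) * Real.exp (c * t) * Real.exp (-(c * t)) := by
          apply mul_le_mul_of_nonneg_right h4 (Real.exp_nonneg _)
      _ = (n.factorial : ℝ) := by rw [mul_assoc, ← Real.exp_add]; simp
  calc t ^ a * Real.exp (-(c * t))
      = t ^ (a - (n : ℝ)) * (t ^ n * Real.exp (-(c * t))) := by rw [h1]; ring
    _ ≤ σ₀ ^ (a - (n : ℝ)) * ((n.factorial : ℝ) / c ^ n) := by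
        apply mul_le_mul h2 h3 (by positivity) (by positivity)

/-- Away from the boundary, the boundary layer `û(x̂,ρ) = e^{-sρ} g(x̂)` is negligible to any
polynomial order in `|s|`: its `j`-th `ρ`-derivative is `(-s)^j e^{-sρ} g(x̂)`, and for
`s ∈ 𝒮` one has
`∫_{𝒪×(ε,∞)} |∂_ρ^j û|² = |s|^{2j} e^{-2 Re(s) ε}/(2 Re s) ∫_𝒪 |g|² ≤ C |s|^{-2ℓ} ∫_𝒪 |g|²`
with `C = C(ε, ℓ, j, σ₀, δ)` independent of `s` and `g`. -/
theorem boundary_layer_negligible_away_from_boundary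
    (σ₀ δ : ℝ) (hσ₀ : 0 < σ₀) (hδ : δ ∈ Set.Ioo 0 (π / 2))
    (ε : ℝ) (hε : 0 < ε) (ℓ : ℝ) (j : ℕ) :
    ∃ C : ℝ, ∀ (s : ℂ), σ₀ < s.re →
      Complex.arg s ∈ Set.Ioo (-(π / 2) + δ) (π / 2 - δ) →
      ∀ (d : ℕ) (𝒪 : Set (EuclideanSpace ℝ (Fin (d - 1)))), MeasurableSet 𝒪 →
      ∀ (g : EuclideanSpace ℝ (Fin (d - 1)) → ℂ), Measurable g →
        IntegrableOn (fun x => ‖g x‖ ^ 2) 𝒪 →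
      (∀ (x : EuclideanSpace ℝ (Fin (d - 1))) (ρ : ℝ),
          iteratedDeriv j (fun t : ℝ => Complex.exp (-s * t) * g x) ρ =
            (-s) ^ j * Complex.exp (-s * ρ) * g x) ∧
      ((∫ p in 𝒪 ×ˢ Set.Ioi ε,
          ‖(-s) ^ j * Complex.exp (-s * p.2) * g p.1‖ ^ 2) =
        ‖s‖ ^ (2 * j) * Real.exp (-2 * s.re * ε) / (2 * s.re) *
          ∫ x in 𝒪, ‖g x‖ ^ 2) ∧
      ‖s‖ ^ (2 * j) * Real.exp (-2 * s.re * ε) / (2 * s.re) *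
          (∫ x in 𝒪, ‖g x‖ ^ 2) ≤
        C * ‖s‖ ^ (-(2 * ℓ)) * ∫ x in 𝒪, ‖g x‖ ^ 2 := by
  obtain ⟨hδ0, hδπ⟩ := hδ
  set c : ℝ := 2 * ε * Real.sin δ with hcdef
  have hsin : 0 < Real.sin δ := Real.sin_pos_of_pos_of_lt_pi hδ0 (by linarith [Real.pi_pos])
  have hc : 0 < c := by positivity
  set a : ℝ := 2 * (j : ℝ) + 2 * ℓ with hadef
  refine ⟨σ₀ ^ (a - (⌈a⌉₊ : ℝ)) * ((⌈a⌉₊.factorial : ℝ) / c ^ ⌈a⌉₊) / (2 * σ₀),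
    fun s hs harg d 𝒪 h𝒪 g hg hgint => ?_⟩
  have hs0 : s ≠ 0 := by
    intro h; rw [h] at hs; simp at hs; linarith
  set t : ℝ := ‖s‖ with htdef
  have hret : s.re ≤ t := Complex.re_le_norm s
  have hσt : σ₀ < t := lt_of_lt_of_le hs hret
  have ht0 : 0 < t := lt_trans hσ₀ hσt
  have hsin_re : t * Real.sin δ ≤ s.re := by
    have hcosarg : Real.cos (Complex.arg s) = s.re / t := Complex.cos_arg hs0
    have habs : |Complex.arg s| ≤ π / 2 - δ := by
      rw [abs_le]; constructor <;> [linarith [harg.1]; linarith [harg.2]]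
    have hcos : Real.cos (π / 2 - δ) ≤ Real.cos (Complex.arg s) := by
      rw [← Real.cos_abs (Complex.arg s)]
      apply Real.cos_le_cos_of_nonneg_of_le_pi (abs_nonneg _)
        (by linarith [Real.pi_pos]) habs
    rw [Real.cos_pi_div_two_sub] at hcos
    rw [hcosarg, le_div_iff₀ ht0] at hcos
    linarith [hcos]
  refine ⟨fun x ρ => iter_deriv_aux s (g x) j ρ, ?_, ?_⟩
  · -- the integral identity
    have hpt : ∀ p : EuclideanSpace ℝ (Fin (d - 1)) × ℝ,
        ‖(-s) ^ j * Complex.exp (-s * p.2) * g p.1‖ ^ 2 =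
          ‖g p.1‖ ^ 2 * (t ^ (2 * j) * Real.exp (-(2 * s.re * p.2))) := by
      intro p
      simp only [norm_mul, norm_pow, norm_neg, Complex.norm_exp]
      have hre : (-s * (p.2 : ℂ)).re = -(s.re * p.2) := by
        simp [Complex.mul_re]
      rw [hre, mul_pow, mul_pow, exp_sq_aux, ← pow_mul, mul_comm j 2]
      rw [htdef]
      ring_nf
    calc (∫ p in 𝒪 ×ˢ Set.Ioi ε,
          ‖(-s) ^ j * Complex.exp (-s * p.2) * g p.1‖ ^ 2)
        = ∫ p in 𝒪 ×ˢ Set.Ioi ε,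
            ‖g p.1‖ ^ 2 * (t ^ (2 * j) * Real.exp (-(2 * s.re * p.2))) := by
          exact integral_congr_ae (Filter.Eventually.of_forall fun p => hpt p)
      _ = (∫ x in 𝒪, ‖g x‖ ^ 2) *
            ∫ ρ in Set.Ioi ε, t ^ (2 * j) * Real.exp (-(2 * s.re * ρ)) := by
          rw [Measure.volume_eq_prod]
          exact setIntegral_prod_mul (fun x => ‖g x‖ ^ 2)
            (fun ρ => t ^ (2 * j) * Real.exp (-(2 * s.re * ρ))) 𝒪 (Set.Ioi ε)
      _ = t ^ (2 * j) * Real.exp (-2 * s.re * ε) / (2 * s.re) *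
            ∫ x in 𝒪, ‖g x‖ ^ 2 := by
          have h2re : (0 : ℝ) < 2 * s.re := by linarith
          rw [MeasureTheory.integral_const_mul, integral_exp_neg_mul_Ioi_aux h2re ε,
            show (-2 : ℝ) * s.re * ε = -(2 * s.re * ε) by ring]
          ring
  · -- the bound
    have hInonneg : 0 ≤ ∫ x in 𝒪, ‖g x‖ ^ 2 :=
      integral_nonneg fun x => by positivity
    have hkey : t ^ (2 * j) * Real.exp (-2 * s.re * ε) / (2 * s.re) ≤
        σ₀ ^ (a - (⌈a⌉₊ : ℝ)) * ((⌈a⌉₊.factorial : ℝ) / c ^ ⌈a⌉₊) / (2 * σ₀) *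
          t ^ (-(2 * ℓ)) := by
      have hexp : Real.exp (-2 * s.re * ε) ≤ Real.exp (-(c * t)) := by
        apply Real.exp_le_exp.2
        have : c * t ≤ 2 * s.re * ε := by
          rw [hcdef]
          nlinarith [hsin_re, hε]
        linarith
      have hsplit : t ^ (2 * j) = t ^ a * t ^ (-(2 * ℓ)) := by
        rw [← Real.rpow_natCast t (2 * j), ← Real.rpow_add ht0]
        congr 1
        rw [hadef]
        push_cast
        ring
      have hM := key_bound_aux hσ₀ hc a t hσt.le
      calc t ^ (2 * j) * Real.exp (-2 * s.re * ε) / (2 * s.re)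
          ≤ t ^ (2 * j) * Real.exp (-(c * t)) / (2 * σ₀) := by
            apply div_le_div₀ (by positivity)
              (mul_le_mul_of_nonneg_left hexp (by positivity))
              (by linarith) (by linarith)
        _ = t ^ a * Real.exp (-(c * t)) * t ^ (-(2 * ℓ)) / (2 * σ₀) := by
            rw [hsplit]; ring
        _ ≤ σ₀ ^ (a - (⌈a⌉₊ : ℝ)) * ((⌈a⌉₊.factorial : ℝ) / c ^ ⌈a⌉₊) * t ^ (-(2 * ℓ))
              / (2 * σ₀) := by
            apply div_le_div_of_nonneg_right ?_ (by linarith)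
            · exact mul_le_mul_of_nonneg_right hM (Real.rpow_nonneg ht0.le _)
        _ = σ₀ ^ (a - (⌈a⌉₊ : ℝ)) * ((⌈a⌉₊.factorial : ℝ) / c ^ ⌈a⌉₊) / (2 * σ₀) *
              t ^ (-(2 * ℓ)) := by ring
    calc t ^ (2 * j) * Real.exp (-2 * s.re * ε) / (2 * s.re) *
          (∫ x in 𝒪, ‖g x‖ ^ 2)
        ≤ σ₀ ^ (a - (⌈a⌉₊ : ℝ)) * ((⌈a⌉₊.factorial : ℝ) / c ^ ⌈a⌉₊) / (2 * σ₀) *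
            t ^ (-(2 * ℓ)) * ∫ x in 𝒪, ‖g x‖ ^ 2 :=
          mul_le_mul_of_nonneg_right hkey hInonneg
      _ = _ := rfl
end

section
/- Fix an opening angle ω ∈ (0, 2π) and set c₁ := cos(ω/2), c₂ := sin(ω/2) (so c₂ > 0), and fix μ > 0. There exists a constant C = C(ω, μ) such that for every continuously differentiable g : [−1, 1] → ℂ and every a > 0, ∫₀¹ |g(r c₁) − g(−r c₁)|² e^{−2 a μ c₂ r} dr ≤ (C / a²) · ∫_{−1}^{1} |g'(τ)|² dτ. -/
open Real Complex MeasureTheory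

/-- Cauchy–Schwarz for nonnegative functions on a finite-measure set. -/
lemma sq_setIntegral_le_cs {s : Set ℝ} (hs : MeasurableSet s) (hμ : volume s ≠ ⊤)
    {f : ℝ → ℝ} (hf_nonneg : ∀ x ∈ s, 0 ≤ f x) (hf : MemLp f 2 (volume.restrict s)) :
    (∫ x in s, f x) ^ 2 ≤ (volume s).toReal * ∫ x in s, f x ^ 2 := by
  haveI : IsFiniteMeasure (volume.restrict s) :=
    ⟨by simpa [Measure.restrict_apply_univ] using hμ.lt_top⟩
  have h22 : (2 : ℝ).HolderConjugate 2 := Real.HolderConjugate.two_two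
  have hone : MemLp (fun _ : ℝ => (1 : ℝ)) (ENNReal.ofReal 2) (volume.restrict s) :=
    memLp_const 1
  have hf' : MemLp f (ENNReal.ofReal 2) (volume.restrict s) := by
    rwa [show ENNReal.ofReal 2 = 2 by norm_num]
  have hnn : 0 ≤ᵐ[volume.restrict s] f :=
    (ae_restrict_iff' hs).2 (Filter.Eventually.of_forall hf_nonneg)
  have key := MeasureTheory.integral_mul_le_Lp_mul_Lq_of_nonneg h22 hnn
    (Filter.Eventually.of_forall fun _ => zero_le_one) hf' hone
  simp only [mul_one] at key
  have h1 : ∫ x in s, (1 : ℝ) ^ (2 : ℝ) = (volume s).toReal := by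
    simp [Measure.restrict_apply_univ, measureReal_def]
  have h2 : ∫ x in s, f x ^ (2 : ℝ) = ∫ x in s, f x ^ 2 := by
    refine setIntegral_congr_fun hs fun x hx => ?_
    rw [← Real.rpow_natCast (f x) 2]; norm_num
  rw [h1, h2] at key
  have hi2 : 0 ≤ ∫ x in s, f x ^ 2 :=
    integral_nonneg fun x => sq_nonneg _
  have hv : 0 ≤ (volume s).toReal := ENNReal.toReal_nonneg
  have hint : 0 ≤ ∫ x in s, f x := setIntegral_nonneg hs hf_nonneg
  calc (∫ x in s, f x) ^ 2
      ≤ ((∫ x in s, f x ^ 2) ^ (1/2 : ℝ) * (volume s).toReal ^ (1/2 : ℝ)) ^ 2 := by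
        apply pow_le_pow_left₀ hint key
    _ = (volume s).toReal * ∫ x in s, f x ^ 2 := by
        rw [mul_pow, ← Real.rpow_natCast (_ ^ (1/2:ℝ)) 2, ← Real.rpow_natCast (_ ^ (1/2:ℝ)) 2,
          ← Real.rpow_mul hi2, ← Real.rpow_mul hv]
        norm_num [Real.rpow_one]
        ring

/-- `∫₀¹ e^{-c r} dr ≤ 1/c`. -/
lemma exp_int_le (c : ℝ) (hc : 0 < c) :
    ∫ r in Set.Ioo (0:ℝ) 1, Real.exp (-(c * r)) ≤ 1 / c := by
  have hd : ∀ x : ℝ, HasDerivAt (fun r => -(Real.exp (-(c * r)) / c)) (Real.exp (-(c * x))) x := by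
    intro x
    have h1 : HasDerivAt (fun r : ℝ => -(c * r)) (-c) x := by
      simpa using ((hasDerivAt_id x).const_mul (-c))
    have h2 := (h1.exp.div_const c).neg
    refine HasDerivAt.congr_deriv h2 ?_
    rw [mul_neg, neg_div, neg_neg, mul_div_assoc, div_self hc.ne', mul_one]
  have hint : IntervalIntegrable (fun r => Real.exp (-(c * r))) volume 0 1 :=
    (Real.continuous_exp.comp (by continuity)).intervalIntegrable 0 1
  have hval : ∫ r in (0:ℝ)..1, Real.exp (-(c * r))
      = -(Real.exp (-(c * 1)) / c) - -(Real.exp (-(c * 0)) / c) :=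
    intervalIntegral.integral_eq_sub_of_hasDerivAt (fun x _ => hd x) hint
  have heq : ∫ r in Set.Ioo (0:ℝ) 1, Real.exp (-(c * r))
      = ∫ r in (0:ℝ)..1, Real.exp (-(c * r)) := by
    rw [intervalIntegral.integral_of_le (by norm_num), MeasureTheory.integral_Ioc_eq_integral_Ioo]
  rw [heq, hval]
  simp only [mul_one, mul_zero, neg_zero, Real.exp_zero]
  have := Real.exp_pos (-c)
  have h0 : 0 ≤ Real.exp (-c) / c := by positivity
  linarith

/-- `r e^{-Lr} ≤ (2/L) e^{-(L/2) r}` for `r, L > 0`. -/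
lemma mul_exp_le (L r : ℝ) (hL : 0 < L) (hr : 0 ≤ r) :
    r * Real.exp (-(L * r)) ≤ 2 / L * Real.exp (-(L / 2 * r)) := by
  have hx : L / 2 * r ≤ Real.exp (L / 2 * r) := by
    have := Real.add_one_le_exp (L / 2 * r); linarith
  have hE : Real.exp (-(L * r)) = Real.exp (-(L/2 * r)) * Real.exp (-(L/2 * r)) := by
    rw [← Real.exp_add]; ring_nf
  have hinv : Real.exp (-(L/2 * r)) = (Real.exp (L/2 * r))⁻¹ := Real.exp_neg _
  have hEpos := Real.exp_pos (L/2 * r)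
  have key : r * Real.exp (-(L/2 * r)) ≤ 2 / L := by
    rw [hinv, mul_inv_le_iff₀ hEpos, mul_comm (2 / L)]
    calc r = 2 / L * (L / 2 * r) := by field_simp
    _ ≤ 2 / L * Real.exp (L/2 * r) := mul_le_mul_of_nonneg_left hx (by positivity)
    _ = Real.exp (L/2 * r) * (2 / L) := mul_comm _ _
  calc r * Real.exp (-(L * r)) = (r * Real.exp (-(L/2*r))) * Real.exp (-(L/2*r)) := by
        rw [hE]; ring
    _ ≤ 2 / L * Real.exp (-(L / 2 * r)) :=
        mul_le_mul_of_nonneg_right key (Real.exp_pos _).le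

lemma jump_sq_le (g : ℝ → ℂ) (hg : ContDiffOn ℝ 1 g (Set.Icc (-1 : ℝ) 1))
    {v : ℝ} (hv0 : 0 ≤ v) (hv1 : v < 1) :
    ‖g v - g (-v)‖ ^ 2
      ≤ 2 * v * ∫ τ in Set.Ioo (-1 : ℝ) 1, ‖deriv g τ‖ ^ 2 := by
  set φ : ℝ → ℂ := derivWithin g (Set.Icc (-1 : ℝ) 1) with hφdef
  have hφ : ContinuousOn φ (Set.Icc (-1 : ℝ) 1) :=
    hg.continuousOn_derivWithin (uniqueDiffOn_Icc (by norm_num)) le_rfl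
  have hdd : ∀ τ ∈ Set.Ioo (-1 : ℝ) 1, DifferentiableAt ℝ g τ ∧ deriv g τ = φ τ := by
    intro τ hτ
    have hmem : Set.Icc (-1 : ℝ) 1 ∈ nhds τ := Icc_mem_nhds hτ.1 hτ.2
    have hdiff : DifferentiableAt ℝ g τ :=
      ((hg.differentiableOn one_ne_zero) τ (Set.Ioo_subset_Icc_self hτ)).differentiableAt hmem
    exact ⟨hdiff, (derivWithin_of_mem_nhds hmem).symm⟩
  -- integrability of |deriv g|^2 on Ioo (-1) 1
  have hφabs2 : ContinuousOn (fun τ => ‖φ τ‖ ^ 2) (Set.Icc (-1 : ℝ) 1) :=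
    (continuous_norm.comp_continuousOn hφ).pow 2
  have hIint : IntegrableOn (fun τ => ‖deriv g τ‖ ^ 2) (Set.Ioo (-1 : ℝ) 1) := by
    refine ((hφabs2.integrableOn_Icc).mono_set Set.Ioo_subset_Icc_self).congr_fun
      (fun τ hτ => ?_) measurableSet_Ioo
    rw [(hdd τ hτ).2]
  set I := ∫ τ in Set.Ioo (-1 : ℝ) 1, ‖deriv g τ‖ ^ 2 with hIdef
  -- FTC
  have hsub : Set.Icc (-v) v ⊆ Set.Ioo (-1 : ℝ) 1 := fun x hx =>
    ⟨by linarith [hx.1], by linarith [hx.2]⟩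
  have huIcc : Set.uIcc (-v) v = Set.Icc (-v) v := Set.uIcc_of_le (by linarith)
  have hcont : ContinuousOn (deriv g) (Set.Icc (-v) v) :=
    (hφ.mono (hsub.trans Set.Ioo_subset_Icc_self)).congr fun x hx => (hdd x (hsub hx)).2
  have hInt : IntervalIntegrable (deriv g) volume (-v) v := by
    apply ContinuousOn.intervalIntegrable
    rwa [huIcc]
  have hftc : ∫ x in (-v)..v, deriv g x = g v - g (-v) :=
    intervalIntegral.integral_deriv_eq_sub
      (fun x hx => (hdd x (hsub (huIcc ▸ hx))).1) hInt
  -- bound by integral of norm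
  have hsub2 : Set.Ioc (-v) v ⊆ Set.Ioo (-1 : ℝ) 1 :=
    (Set.Ioc_subset_Icc_self).trans hsub
  have hnorm : ‖g v - g (-v)‖ ≤ ∫ x in Set.Ioc (-v) v, ‖deriv g x‖ := by
    rw [← hftc]
    calc ‖∫ x in (-v)..v, deriv g x‖ ≤ ∫ x in (-v)..v, ‖deriv g x‖ :=
          intervalIntegral.norm_integral_le_integral_norm (by linarith)
      _ = ∫ x in Set.Ioc (-v) v, ‖deriv g x‖ := by
          rw [intervalIntegral.integral_of_le (by linarith)]
  -- Cauchy-Schwarz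
  have hmeas : MeasurableSet (Set.Ioc (-v) v) := measurableSet_Ioc
  have hEq : Set.EqOn (fun x => ‖deriv g x‖) (fun x => ‖φ x‖)
      (Set.Ioc (-v) v) := fun x hx => by simp only [(hdd x (hsub2 hx)).2]
  have hφs : ContinuousOn (fun x => ‖φ x‖) (Set.Ioc (-v) v) :=
    (continuous_norm.comp_continuousOn
      (hφ.mono (hsub2.trans (Set.Ioo_subset_Icc_self))))
  have hasm : AEStronglyMeasurable (fun x => ‖deriv g x‖)
      (volume.restrict (Set.Ioc (-v) v)) := by
    refine (hφs.aestronglyMeasurable hmeas).congr ?_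
    exact (ae_restrict_iff' hmeas).2 (Filter.Eventually.of_forall fun x hx => (hEq hx).symm)
  have hsqint : Integrable (fun x => ‖deriv g x‖ ^ 2)
      (volume.restrict (Set.Ioc (-v) v)) :=
    hIint.mono_set hsub2
  have hmem2 : MemLp (fun x => ‖deriv g x‖) 2 (volume.restrict (Set.Ioc (-v) v)) :=
    (memLp_two_iff_integrable_sq hasm).2 hsqint
  have hvol : volume (Set.Ioc (-v) v) ≠ ⊤ := (measure_Ioc_lt_top).ne
  have hCS := sq_setIntegral_le_cs hmeas hvol (fun x _ => norm_nonneg _) hmem2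
  have hvol2 : (volume (Set.Ioc (-v) v)).toReal = 2 * v := by
    rw [Real.volume_Ioc, ENNReal.toReal_ofReal (by linarith)]; ring
  -- tail bound
  have htail : ∫ x in Set.Ioc (-v) v, ‖deriv g x‖ ^ 2 ≤ I := by
    refine setIntegral_mono_set hIint ?_ (HasSubset.Subset.eventuallyLE hsub2)
    exact Filter.Eventually.of_forall fun x => sq_nonneg _
  have hintnn : 0 ≤ ∫ x in Set.Ioc (-v) v, ‖deriv g x‖ :=
    setIntegral_nonneg hmeas fun x _ => norm_nonneg _
  calc ‖g v - g (-v)‖ ^ 2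
      ≤ (∫ x in Set.Ioc (-v) v, ‖deriv g x‖) ^ 2 :=
        pow_le_pow_left₀ (norm_nonneg _) hnorm 2
    _ ≤ (volume (Set.Ioc (-v) v)).toReal * ∫ x in Set.Ioc (-v) v, ‖deriv g x‖ ^ 2 :=
        hCS
    _ = 2 * v * ∫ x in Set.Ioc (-v) v, ‖deriv g x‖ ^ 2 := by rw [hvol2]
    _ ≤ 2 * v * I := by
        apply mul_le_mul_of_nonneg_left htail (by linarith)

/-- Dirichlet jump estimate at a corner: with `c₁ = cos(ω/2)`, `c₂ = sin(ω/2)`, `μ > 0`,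
there is `C = C(ω, μ)` such that for every `C¹` function `g : [-1,1] → ℂ` and every `a > 0`,
`∫₀¹ |g(r c₁) - g(-r c₁)|² e^{-2 a μ c₂ r} dr ≤ (C / a²) ∫_{-1}^{1} |g'|²`. -/
theorem corner_dirichlet_jump_estimate (ω μ : ℝ) (hω : ω ∈ Set.Ioo 0 (2 * π)) (hμ : 0 < μ) :
    ∃ C : ℝ, 0 < C ∧
      ∀ g : ℝ → ℂ, ContDiffOn ℝ 1 g (Set.Icc (-1 : ℝ) 1) →
      ∀ a : ℝ, 0 < a →
      (∫ r in Set.Ioo (0 : ℝ) 1,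
          ‖g (r * Real.cos (ω / 2)) - g (-(r * Real.cos (ω / 2)))‖ ^ 2 *
            Real.exp (-2 * a * μ * Real.sin (ω / 2) * r)) ≤
        C / a ^ 2 * ∫ τ in Set.Ioo (-1 : ℝ) 1, ‖deriv g τ‖ ^ 2 := by
  have hc2 : 0 < Real.sin (ω / 2) :=
    Real.sin_pos_of_pos_of_lt_pi (by linarith [hω.1]) (by linarith [hω.2])
  refine ⟨2 / (μ ^ 2 * Real.sin (ω / 2) ^ 2), by positivity, ?_⟩
  intro g hg a ha
  set c1 := Real.cos (ω / 2) with hc1def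
  set c2 := Real.sin (ω / 2) with hc2def
  set L := 2 * a * μ * c2 with hLdef
  have hL : 0 < L := by positivity
  have hc1 : |c1| ≤ 1 := abs_cos_le_one _
  set I := ∫ τ in Set.Ioo (-1 : ℝ) 1, ‖deriv g τ‖ ^ 2 with hIdef
  have hInn : 0 ≤ I := setIntegral_nonneg measurableSet_Ioo fun τ _ => sq_nonneg _
  -- pointwise bound
  have hpt : ∀ r ∈ Set.Ioo (0 : ℝ) 1,
      ‖g (r * c1) - g (-(r * c1))‖ ^ 2 * Real.exp (-2 * a * μ * c2 * r)
        ≤ 4 * I / L * Real.exp (-(L / 2 * r)) := by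
    intro r hr
    set v := r * |c1| with hvdef
    have hv0 : 0 ≤ v := mul_nonneg hr.1.le (abs_nonneg _)
    have hvr : v ≤ r := by
      calc v ≤ r * 1 := mul_le_mul_of_nonneg_left hc1 hr.1.le
        _ = r := mul_one r
    have hv1 : v < 1 := lt_of_le_of_lt hvr hr.2
    have habs : ‖g (r * c1) - g (-(r * c1))‖ = ‖g v - g (-v)‖ := by
      rcases abs_cases c1 with ⟨h, _⟩ | ⟨h, _⟩
      · rw [hvdef, h]
      · have e1 : v = -(r * c1) := by rw [hvdef, h]; ring
        have e2 : -v = r * c1 := by rw [hvdef, h]; ring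
        rw [e1, neg_neg]
        exact (norm_sub_rev _ _).symm
    have hjump : ‖g (r * c1) - g (-(r * c1))‖ ^ 2 ≤ 2 * r * I := by
      rw [habs]
      calc ‖g v - g (-v)‖ ^ 2 ≤ 2 * v * I :=
            jump_sq_le g hg hv0 hv1
        _ ≤ 2 * r * I := mul_le_mul_of_nonneg_right (by linarith) hInn
    have hexp : (-2 * a * μ * c2 * r) = -(L * r) := by rw [hLdef]; ring
    rw [hexp]
    calc ‖g (r * c1) - g (-(r * c1))‖ ^ 2 * Real.exp (-(L * r))
        ≤ 2 * r * I * Real.exp (-(L * r)) :=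
          mul_le_mul_of_nonneg_right hjump (Real.exp_pos _).le
      _ = 2 * I * (r * Real.exp (-(L * r))) := by ring
      _ ≤ 2 * I * (2 / L * Real.exp (-(L / 2 * r))) :=
          mul_le_mul_of_nonneg_left (mul_exp_le L r hL hr.1.le) (by linarith)
      _ = 4 * I / L * Real.exp (-(L / 2 * r)) := by ring
  -- integrability of LHS integrand on Ioo 0 1
  have hbnd : ∀ r ∈ Set.Icc (0:ℝ) 1, -1 ≤ r * c1 ∧ r * c1 ≤ 1 := by
    intro r hr
    have h1 := abs_le.1 hc1
    constructor <;>
      nlinarith [mul_nonneg hr.1 (by linarith : (0:ℝ) ≤ c1 + 1),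
        mul_nonneg hr.1 (by linarith : (0:ℝ) ≤ 1 - c1), hr.2]
  have hmap1 : Set.MapsTo (fun r : ℝ => r * c1) (Set.Icc 0 1) (Set.Icc (-1 : ℝ) 1) := by
    intro r hr
    simp only [Set.mem_Icc]
    exact hbnd r hr
  have hmap2 : Set.MapsTo (fun r : ℝ => -(r * c1)) (Set.Icc 0 1) (Set.Icc (-1 : ℝ) 1) := by
    intro r hr
    have := hbnd r hr
    simp only [Set.mem_Icc]
    constructor <;> linarith [this.1, this.2]
  have hF1 : ContinuousOn (fun r => g (r * c1)) (Set.Icc (0 : ℝ) 1) :=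
    hg.continuousOn.comp (continuous_id.mul continuous_const).continuousOn hmap1
  have hF2 : ContinuousOn (fun r => g (-(r * c1))) (Set.Icc (0 : ℝ) 1) :=
    hg.continuousOn.comp ((continuous_id.mul continuous_const).neg).continuousOn hmap2
  have hFcont : ContinuousOn (fun r =>
      ‖g (r * c1) - g (-(r * c1))‖ ^ 2 * Real.exp (-2 * a * μ * c2 * r))
      (Set.Icc (0 : ℝ) 1) :=
    ((continuous_norm.comp_continuousOn (hF1.sub hF2)).pow 2).mul
      (Real.continuous_exp.comp (continuous_const.mul continuous_id)).continuousOn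
  have hFint : IntegrableOn (fun r =>
      ‖g (r * c1) - g (-(r * c1))‖ ^ 2 * Real.exp (-2 * a * μ * c2 * r))
      (Set.Ioo (0 : ℝ) 1) :=
    hFcont.integrableOn_Icc.mono_set Set.Ioo_subset_Icc_self
  have hGint : IntegrableOn (fun r => 4 * I / L * Real.exp (-(L / 2 * r)))
      (Set.Ioo (0 : ℝ) 1) :=
    (continuous_const.mul (Real.continuous_exp.comp
      ((continuous_const.mul continuous_id).neg))).integrableOn_Icc.mono_set
      Set.Ioo_subset_Icc_self
  calc (∫ r in Set.Ioo (0 : ℝ) 1,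
        ‖g (r * c1) - g (-(r * c1))‖ ^ 2 * Real.exp (-2 * a * μ * c2 * r))
      ≤ ∫ r in Set.Ioo (0 : ℝ) 1, 4 * I / L * Real.exp (-(L / 2 * r)) :=
        setIntegral_mono_on hFint hGint measurableSet_Ioo hpt
    _ = 4 * I / L * ∫ r in Set.Ioo (0 : ℝ) 1, Real.exp (-(L / 2 * r)) := by
        rw [integral_const_mul]
    _ ≤ 4 * I / L * (1 / (L / 2)) := by
        apply mul_le_mul_of_nonneg_left (exp_int_le (L / 2) (by positivity)) (by positivity)
    _ = 2 / (μ ^ 2 * c2 ^ 2) / a ^ 2 * I := by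
        rw [hLdef]
        field_simp
        ring
end

section
/- Fix an opening angle ω ∈ (0, 2π) and set c₁ := cos(ω/2), c₂ := sin(ω/2) (so c₂ > 0), and fix μ > 0. There exists a constant C = C(ω, μ) such that for every continuously differentiable g : [−1, 1] → ℂ and every a > 0, ∫₀¹ r^{−1} |g(r c₁) − g(−r c₁)|² e^{−2 a μ c₂ r} dr ≤ (C / a) · ∫_{−1}^{1} |g'(τ)|² dτ. (This is the distance-weighted jump estimate ‖d₀^{−1/2}(u₁ − u₂)‖²_{L²(Γ')} ≲ Re(s)^{−1} ‖g'‖²_{L²(−1,1)}, where d₀(r) = r is the distance to the apex.) -/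
open Real Complex MeasureTheory

/-- Cauchy–Schwarz on an interval: `(∫ h)² ≤ (B - A) ∫ h²`. -/
lemma cs_aux {A B : ℝ} (hAB : A ≤ B) {h : ℝ → ℝ} (h0 : ∀ x, 0 ≤ h x)
    (hmeas : AEStronglyMeasurable h (volume.restrict (Set.Ioc A B)))
    (hsq : IntegrableOn (fun x => h x ^ 2) (Set.Ioc A B)) :
    (∫ x in Set.Ioc A B, h x) ^ 2 ≤ (B - A) * ∫ x in Set.Ioc A B, h x ^ 2 := by
  haveI : IsFiniteMeasure (volume.restrict (Set.Ioc A B)) := by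
    constructor
    rw [Measure.restrict_apply_univ, Real.volume_Ioc]
    exact ENNReal.ofReal_lt_top
  have hpq : Real.HolderConjugate 2 2 := Real.HolderConjugate.two_two
  have h2 : (ENNReal.ofReal (2:ℝ)) = 2 := by norm_num
  have hf1 : MemLp (fun _ : ℝ => (1:ℝ)) (ENNReal.ofReal (2:ℝ))
      (volume.restrict (Set.Ioc A B)) := memLp_const 1
  have hh : MemLp h (ENNReal.ofReal (2:ℝ)) (volume.restrict (Set.Ioc A B)) := by
    rw [h2]
    exact (memLp_two_iff_integrable_sq hmeas).2 (by simpa [sq, IntegrableOn] using hsq)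
  have key := MeasureTheory.integral_mul_le_Lp_mul_Lq_of_nonneg hpq
    (μ := volume.restrict (Set.Ioc A B)) (f := fun _ => (1:ℝ)) (g := h)
    (Filter.Eventually.of_forall fun _ => zero_le_one)
    (Filter.Eventually.of_forall h0) hf1 hh
  simp only [one_mul] at key
  have e1 : (∫ _ in Set.Ioc A B, (1:ℝ) ^ (2:ℝ)) = B - A := by
    simp [Real.volume_Ioc, ENNReal.toReal_ofReal (sub_nonneg.2 hAB), hAB]
  have e2 : (∫ x in Set.Ioc A B, h x ^ (2:ℝ)) = ∫ x in Set.Ioc A B, h x ^ 2 := by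
    refine integral_congr_ae (Filter.Eventually.of_forall fun x => ?_)
    have : h x ^ (2:ℝ) = h x ^ (2:ℕ) := by
      rw [← Real.rpow_natCast (h x) 2]; norm_num
    simpa using this
  rw [e1, e2] at key
  have hI0 : 0 ≤ ∫ x in Set.Ioc A B, h x := integral_nonneg h0
  have hI20 : 0 ≤ ∫ x in Set.Ioc A B, h x ^ 2 :=
    integral_nonneg fun x => sq_nonneg _
  calc (∫ x in Set.Ioc A B, h x) ^ 2
      ≤ ((B - A) ^ (1/(2:ℝ)) * (∫ x in Set.Ioc A B, h x ^ 2) ^ (1/(2:ℝ))) ^ 2 := by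
        apply pow_le_pow_left₀ hI0 key
    _ = (B - A) * ∫ x in Set.Ioc A B, h x ^ 2 := by
        rw [mul_pow, ← Real.rpow_natCast ((B - A) ^ (1/(2:ℝ))) 2,
          ← Real.rpow_natCast ((∫ x in Set.Ioc A B, h x ^ 2) ^ (1/(2:ℝ))) 2,
          ← Real.rpow_mul (sub_nonneg.2 hAB), ← Real.rpow_mul hI20]
        norm_num

/-- `∫₀¹ e^{-l r} dr ≤ 1/l`. -/
lemma exp_int_aux {l : ℝ} (hl : 0 < l) :
    (∫ r in Set.Ioo (0:ℝ) 1, Real.exp (-(l * r))) ≤ l⁻¹ := by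
  have hkey : ∀ x ∈ Set.uIcc (0:ℝ) 1,
      HasDerivAt (fun r => -l⁻¹ * Real.exp (-(l * r))) (Real.exp (-(l * x))) x := by
    intro x _
    have h1 : HasDerivAt (fun r : ℝ => -(l * r)) (-l) x := by
      simpa using ((hasDerivAt_id x).const_mul (-l))
    have h2 := (Real.hasDerivAt_exp (-(l * x))).comp x h1
    have h3 := h2.const_mul (-l⁻¹)
    refine h3.congr_deriv ?_
    rw [mul_comm (Real.exp _) (-l), ← mul_assoc, neg_mul_neg, inv_mul_cancel₀ hl.ne', one_mul]
  have hint : IntervalIntegrable (fun r => Real.exp (-(l * r))) volume 0 1 :=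
    (by continuity : Continuous fun r : ℝ => Real.exp (-(l * r))).intervalIntegrable 0 1
  have hval : (∫ r in (0:ℝ)..1, Real.exp (-(l * r)))
      = -l⁻¹ * Real.exp (-(l * 1)) - -l⁻¹ * Real.exp (-(l * 0)) :=
    intervalIntegral.integral_eq_sub_of_hasDerivAt hkey hint
  have h01 : (∫ r in Set.Ioo (0:ℝ) 1, Real.exp (-(l * r)))
      = ∫ r in (0:ℝ)..1, Real.exp (-(l * r)) := by
    rw [intervalIntegral.integral_of_le zero_le_one]
    exact setIntegral_congr_set MeasureTheory.Ioo_ae_eq_Ioc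
  rw [h01, hval]
  have : 0 ≤ Real.exp (-(l * 1)) := (Real.exp_pos _).le
  have hli : 0 < l⁻¹ := inv_pos.2 hl
  simp only [mul_zero, neg_zero, Real.exp_zero, mul_one]
  nlinarith [Real.exp_pos (-(l:ℝ))]

/-- Distance-weighted Dirichlet jump estimate at a corner
(`‖d₀^{-1/2}(u₁ - u₂)‖²_{L²(Γ')} ≲ Re(s)^{-1} ‖g'‖²_{L²(-1,1)}`):
with `c₁ = cos(ω/2)`, `c₂ = sin(ω/2)`, `μ > 0`, there is `C = C(ω, μ)` such that for every
`C¹` function `g : [-1,1] → ℂ` and every `a > 0`,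
`∫₀¹ r⁻¹ |g(r c₁) - g(-r c₁)|² e^{-2 a μ c₂ r} dr ≤ (C / a) ∫_{-1}^{1} |g'|²`. -/
theorem corner_weighted_dirichlet_jump_estimate (ω μ : ℝ) (hω : ω ∈ Set.Ioo 0 (2 * π))
    (hμ : 0 < μ) :
    ∃ C : ℝ, 0 < C ∧
      ∀ g : ℝ → ℂ, ContDiffOn ℝ 1 g (Set.Icc (-1 : ℝ) 1) →
      ∀ a : ℝ, 0 < a →
      (∫ r in Set.Ioo (0 : ℝ) 1,
          r⁻¹ * ‖g (r * Real.cos (ω / 2)) - g (-(r * Real.cos (ω / 2)))‖ ^ 2 *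
            Real.exp (-2 * a * μ * Real.sin (ω / 2) * r)) ≤
        C / a * ∫ τ in Set.Ioo (-1 : ℝ) 1, ‖deriv g τ‖ ^ 2 := by
  obtain ⟨hω0, hω2⟩ := hω
  set c : ℝ := Real.cos (ω / 2) with hc
  set s2 : ℝ := Real.sin (ω / 2) with hs2def
  have hs2 : 0 < s2 := Real.sin_pos_of_pos_of_lt_pi (by linarith) (by linarith)
  have hcle : |c| ≤ 1 := Real.abs_cos_le_one _
  refine ⟨(|c| + 1) / (μ * s2), by positivity, ?_⟩
  intro g hg a ha
  set C : ℝ := (|c| + 1) / (μ * s2) with hCdef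
  set l : ℝ := 2 * a * μ * s2 with hldef
  have hl : 0 < l := by positivity
  set K : ℝ := ∫ τ in Set.Ioo (-1:ℝ) 1, ‖deriv g τ‖ ^ 2 with hKdef
  have hK0 : 0 ≤ K := integral_nonneg fun τ => by positivity
  -- continuity of the derivative
  set f : ℝ → ℂ := derivWithin g (Set.Icc (-1:ℝ) 1) with hfdef
  have hfc : ContinuousOn f (Set.Icc (-1:ℝ) 1) :=
    hg.continuousOn_derivWithin (uniqueDiffOn_Icc (by norm_num)) le_rfl
  have heq : ∀ x ∈ Set.Ioo (-1:ℝ) 1, deriv g x = f x := fun x hx =>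
    (derivWithin_of_mem_nhds (Icc_mem_nhds hx.1 hx.2)).symm
  have hderivc : ContinuousOn (deriv g) (Set.Ioo (-1:ℝ) 1) :=
    (hfc.mono Set.Ioo_subset_Icc_self).congr heq
  -- integrability of |g'|² on (-1,1)
  have hKint : IntegrableOn (fun τ => ‖deriv g τ‖ ^ 2) (Set.Ioo (-1:ℝ) 1) := by
    have h1 : IntegrableOn (fun τ => ‖f τ‖ ^ 2) (Set.Icc (-1:ℝ) 1) :=
      (ContinuousOn.pow (continuous_norm.comp_continuousOn hfc) 2).integrableOn_compact
        isCompact_Icc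
    exact (h1.mono_set Set.Ioo_subset_Icc_self).congr_fun
      (fun x hx => by rw [heq x hx]) measurableSet_Ioo
  -- pointwise bound
  have hpt : ∀ r ∈ Set.Ioo (0:ℝ) 1,
      r⁻¹ * ‖g (r * c) - g (-(r * c))‖ ^ 2 * Real.exp (-2 * a * μ * s2 * r)
        ≤ (2 * |c| * K) * Real.exp (-(l * r)) := by
    intro r hr
    obtain ⟨hr0, hr1⟩ := hr
    set B : ℝ := r * |c| with hBdef
    have hB0 : 0 ≤ B := by positivity
    have hB1 : B < 1 := lt_of_le_of_lt (by nlinarith : B ≤ r) hr1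
    have hAB : -B ≤ B := by linarith
    have hsub : Set.Icc (-B) B ⊆ Set.Ioo (-1:ℝ) 1 := fun x hx =>
      ⟨by linarith [hx.1], lt_of_le_of_lt hx.2 hB1⟩
    have habs : ‖g (r * c) - g (-(r * c))‖ = ‖g B - g (-B)‖ := by
      rcases le_or_gt 0 c with h | h
      · rw [hBdef, _root_.abs_of_nonneg h]
      · rw [hBdef, _root_.abs_of_neg h, norm_sub_rev]
        ring_nf
    have hgd : ∀ x ∈ Set.uIcc (-B) B, HasDerivAt g (deriv g x) x := by
      intro x hx
      rw [Set.uIcc_of_le hAB] at hx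
      exact ((hg.contDiffAt (Icc_mem_nhds (hsub hx).1 (hsub hx).2)).differentiableAt
        one_ne_zero).hasDerivAt
    have hcont : ContinuousOn (deriv g) (Set.Icc (-B) B) := hderivc.mono hsub
    have hii : IntervalIntegrable (deriv g) volume (-B) B := by
      apply ContinuousOn.intervalIntegrable
      rwa [Set.uIcc_of_le hAB]
    have hFTC : g B - g (-B) = ∫ t in (-B)..B, deriv g t :=
      (intervalIntegral.integral_eq_sub_of_hasDerivAt hgd hii).symm
    have hnorm : ‖g B - g (-B)‖ ≤ ∫ t in Set.Ioc (-B) B, ‖deriv g t‖ := by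
      rw [hFTC,
        ← intervalIntegral.integral_of_le hAB]
      exact intervalIntegral.norm_integral_le_integral_norm hAB
    have hmeas : AEStronglyMeasurable (fun t => ‖deriv g t‖)
        (volume.restrict (Set.Ioc (-B) B)) :=
      ((hcont.mono Set.Ioc_subset_Icc_self).norm).aestronglyMeasurable measurableSet_Ioc
    have hsq : IntegrableOn (fun t => ‖deriv g t‖ ^ 2) (Set.Ioc (-B) B) := by
      have : IntegrableOn (fun t => ‖deriv g t‖ ^ 2) (Set.Icc (-B) B) :=
        (hcont.norm.pow 2).integrableOn_compact isCompact_Icc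
      exact this.mono_set Set.Ioc_subset_Icc_self
    have hCS : (∫ t in Set.Ioc (-B) B, ‖deriv g t‖) ^ 2
        ≤ (B - -B) * ∫ t in Set.Ioc (-B) B, ‖deriv g t‖ ^ 2 :=
      cs_aux hAB (fun x => norm_nonneg _) hmeas hsq
    have hsubint : (∫ t in Set.Ioc (-B) B, ‖deriv g t‖ ^ 2) ≤ K := by
      rw [hKdef]
      have hKint' : IntegrableOn (fun τ => ‖deriv g τ‖ ^ 2) (Set.Ioo (-1:ℝ) 1) := by
        exact hKint
      have := setIntegral_mono_set hKint'
        (Filter.Eventually.of_forall fun x => by positivity)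
        (HasSubset.Subset.eventuallyLE (Set.Ioc_subset_Icc_self.trans hsub))
      exact this
    have habs2 : ‖g (r * c) - g (-(r * c))‖ ^ 2 ≤ 2 * r * |c| * K := by
      rw [habs]
      calc ‖g B - g (-B)‖ ^ 2
          ≤ (∫ t in Set.Ioc (-B) B, ‖deriv g t‖) ^ 2 := by
            apply pow_le_pow_left₀ (norm_nonneg _) hnorm
        _ ≤ (B - -B) * ∫ t in Set.Ioc (-B) B, ‖deriv g t‖ ^ 2 := hCS
        _ ≤ (B - -B) * K := by
            apply mul_le_mul_of_nonneg_left hsubint (by linarith)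
        _ = 2 * r * |c| * K := by rw [hBdef]; ring
    have hexp : Real.exp (-2 * a * μ * s2 * r) = Real.exp (-(l * r)) := by
      rw [hldef]; ring_nf
    rw [hexp]
    have hrinv : 0 < r⁻¹ := inv_pos.2 hr0
    calc r⁻¹ * ‖g (r * c) - g (-(r * c))‖ ^ 2 * Real.exp (-(l * r))
        ≤ r⁻¹ * (2 * r * |c| * K) * Real.exp (-(l * r)) := by
          apply mul_le_mul_of_nonneg_right _ (Real.exp_pos _).le
          exact mul_le_mul_of_nonneg_left habs2 hrinv.le
      _ = (2 * |c| * K) * Real.exp (-(l * r)) := by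
          field_simp
  -- integrate the pointwise bound
  have hRHSint : IntegrableOn (fun r => (2 * |c| * K) * Real.exp (-(l * r)))
      (Set.Ioo (0:ℝ) 1) := by
    have : Continuous fun r : ℝ => (2 * |c| * K) * Real.exp (-(l * r)) := by continuity
    exact (this.integrableOn_Ioc (a := 0) (b := 1)).mono_set Set.Ioo_subset_Ioc_self
  have hmono : (∫ r in Set.Ioo (0:ℝ) 1,
      r⁻¹ * ‖g (r * c) - g (-(r * c))‖ ^ 2 * Real.exp (-2 * a * μ * s2 * r))
      ≤ ∫ r in Set.Ioo (0:ℝ) 1, (2 * |c| * K) * Real.exp (-(l * r)) := by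
    apply integral_mono_of_nonneg
    · filter_upwards [ae_restrict_mem measurableSet_Ioo] with r hr
      have : 0 ≤ r⁻¹ := inv_nonneg.2 hr.1.le
      positivity
    · exact hRHSint
    · filter_upwards [ae_restrict_mem measurableSet_Ioo] with r hr
      exact hpt r hr
  have hcalc : (∫ r in Set.Ioo (0:ℝ) 1, (2 * |c| * K) * Real.exp (-(l * r)))
      ≤ C / a * K := by
    rw [integral_const_mul]
    have h1 : (2 * |c| * K) * (∫ r in Set.Ioo (0:ℝ) 1, Real.exp (-(l * r)))
        ≤ (2 * |c| * K) * l⁻¹ := by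
      apply mul_le_mul_of_nonneg_left (exp_int_aux hl) (by positivity)
    refine h1.trans ?_
    have hne1 : (μ * s2 * a) ≠ 0 := by positivity
    have hne2 : (2 * a * μ * s2) ≠ 0 := by positivity
    have heq1 : 2 * |c| * K * l⁻¹ = |c| / (μ * s2 * a) * K := by
      rw [hldef]; field_simp
    have heq2 : C / a * K = (|c| + 1) / (μ * s2 * a) * K := by
      rw [hCdef, div_div]
    rw [heq1, heq2]
    gcongr
    linarith [abs_nonneg c]
  exact hmono.trans hcalc
end

section
/- Let σ₀ > 0, δ ∈ (0, π/2). Fix ω ∈ (0, 2π), set c₁ := cos(ω/2), c₂ := sin(ω/2), and fix μ > 0. There exists a constant C = C(ω, μ, δ) such that for every s ∈ 𝒮 and every continuously differentiable g : [−1,1] → ℂ, the function J(r) := (g(r c₁) − g(−r c₁)) · e^{−s μ c₂ r} satisfies ∫₀¹ |J'(r)|² dr ≤ C · ∫_{−1}^{1} |g'(τ)|² dτ, where J'(r) = −s μ c₂ e^{−c₂ μ s r}(g(r c₁) − g(−r c₁)) + e^{−c₂ μ s r} c₁ (g'(r c₁) + g'(−r c₁)). -/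
open Real Complex MeasureTheory

set_option maxHeartbeats 1000000

lemma sq_integral_le_meas_mul_integral_sq {μ : Measure ℝ} [IsFiniteMeasure μ] {f : ℝ → ℝ}
    (hf0 : 0 ≤ᵐ[μ] f) (hf : MemLp f 2 μ) :
    (∫ x, f x ∂μ) ^ 2 ≤ (μ Set.univ).toReal * ∫ x, f x ^ 2 ∂μ := by
  have hpq : Real.HolderConjugate 2 2 := Real.HolderConjugate.two_two
  have h1 : MemLp (fun _ : ℝ => (1 : ℝ)) (ENNReal.ofReal 2) μ := by
    simpa using (memLp_const (1 : ℝ) (μ := μ) (p := ENNReal.ofReal 2))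
  have hf' : MemLp f (ENNReal.ofReal 2) μ := by
    simpa [ENNReal.ofReal_ofNat] using hf
  have := MeasureTheory.integral_mul_le_Lp_mul_Lq_of_nonneg hpq hf0
    (Filter.Eventually.of_forall fun _ => zero_le_one) hf' h1
  simp only [mul_one, one_pow] at this
  have h2 : ∫ x, f x ^ (2:ℝ) ∂μ = ∫ x, f x ^ 2 ∂μ := by
    refine integral_congr_ae (Filter.Eventually.of_forall fun x => ?_)
    simp [Real.rpow_natCast]
  have h3 : ∫ _x, (1:ℝ) ^ (2:ℝ) ∂μ = (μ Set.univ).toReal := by simp; rfl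
  rw [h2, h3] at this
  have hI2 : 0 ≤ ∫ x, f x ^ 2 ∂μ := integral_nonneg fun x => sq_nonneg _
  have hμ0 : 0 ≤ (μ Set.univ).toReal := ENNReal.toReal_nonneg
  have hsq : ((∫ x, f x ^ 2 ∂μ) ^ ((1:ℝ)/2)) ^ 2 = ∫ x, f x ^ 2 ∂μ := by
    rw [← Real.rpow_natCast (_ ^ ((1:ℝ)/2)) 2, ← Real.rpow_mul hI2]; norm_num
  have hsq2 : (((μ Set.univ).toReal) ^ ((1:ℝ)/2)) ^ 2 = (μ Set.univ).toReal := by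
    rw [← Real.rpow_natCast (_ ^ ((1:ℝ)/2)) 2, ← Real.rpow_mul hμ0]; norm_num
  calc (∫ x, f x ∂μ) ^ 2
      ≤ ((∫ x, f x ^ 2 ∂μ) ^ ((1:ℝ)/2) * ((μ Set.univ).toReal) ^ ((1:ℝ)/2)) ^ 2 := by
        apply pow_le_pow_left₀ (integral_nonneg_of_ae hf0) this
    _ = (μ Set.univ).toReal * ∫ x, f x ^ 2 ∂μ := by rw [mul_pow, hsq, hsq2]; ring

lemma scaled_integral_le {f : ℝ → ℝ} (hf0 : ∀ x, 0 ≤ f x)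
    (hfi : IntegrableOn f (Set.Ioo (-1:ℝ) 1)) {c : ℝ} (hc : c ≠ 0) (hc1 : |c| < 1) :
    ∫ r in Set.Ioo (0:ℝ) 1, f (r * c) ≤ |c|⁻¹ * ∫ τ in Set.Ioo (-1:ℝ) 1, f τ := by
  have h1 : ∫ r in Set.Ioo (0:ℝ) 1, f (r * c) = ∫ r in (0:ℝ)..1, f (r * c) := by
    rw [intervalIntegral.integral_of_le zero_le_one, integral_Ioc_eq_integral_Ioo]
  have h2 : (∫ r in (0:ℝ)..1, f (r * c)) = c⁻¹ • ∫ x in (0:ℝ)..c, f x := by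
    rw [intervalIntegral.integral_comp_mul_right f hc]; norm_num
  have hmono : ∀ a b : ℝ, Set.Ioc a b ⊆ Set.Ioo (-1:ℝ) 1 →
      ∫ x in Set.Ioc a b, f x ≤ ∫ τ in Set.Ioo (-1:ℝ) 1, f τ := by
    intro a b hsub
    exact setIntegral_mono_set hfi (Filter.Eventually.of_forall hf0)
      (HasSubset.Subset.eventuallyLE hsub)
  rcases lt_or_gt_of_ne hc with hneg | hpos
  · have hr : (∫ x in (0:ℝ)..c, f x) = -∫ x in Set.Ioc c 0, f x := by
      rw [intervalIntegral.integral_symm, intervalIntegral.integral_of_le hneg.le]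
    rw [h1, h2, hr, smul_eq_mul, abs_of_neg hneg]
    have hsub : Set.Ioc c 0 ⊆ Set.Ioo (-1:ℝ) 1 := by
      intro x hx
      constructor
      · have : -1 < c := by rw [abs_of_neg hneg] at hc1; linarith
        exact lt_of_lt_of_le this hx.1.le
      · exact lt_of_le_of_lt hx.2 one_pos
    have h3 : (0:ℝ) ≤ ∫ x in Set.Ioc c 0, f x := setIntegral_nonneg measurableSet_Ioc fun x _ => hf0 x
    have := hmono c 0 hsub
    have hcinv : (0:ℝ) < (-c)⁻¹ := inv_pos.mpr (neg_pos.mpr hneg)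
    calc c⁻¹ * -∫ x in Set.Ioc c 0, f x = (-c)⁻¹ * ∫ x in Set.Ioc c 0, f x := by
          rw [inv_neg]; ring
      _ ≤ (-c)⁻¹ * ∫ τ in Set.Ioo (-1:ℝ) 1, f τ := by
          exact mul_le_mul_of_nonneg_left this hcinv.le
  · have hr : (∫ x in (0:ℝ)..c, f x) = ∫ x in Set.Ioc 0 c, f x :=
      intervalIntegral.integral_of_le hpos.le
    rw [h1, h2, hr, smul_eq_mul, abs_of_pos hpos]
    have hsub : Set.Ioc 0 c ⊆ Set.Ioo (-1:ℝ) 1 := by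
      intro x hx
      refine ⟨lt_trans (by norm_num) hx.1, lt_of_le_of_lt hx.2 ?_⟩
      rwa [abs_of_pos hpos] at hc1
    exact mul_le_mul_of_nonneg_left (hmono 0 c hsub) (by positivity)

lemma two_mul_le_exp {y : ℝ} (hy : 0 ≤ y) : 2 * y ≤ Real.exp y := by
  have h := Real.add_one_le_exp (y/2)
  have h2 : Real.exp y = Real.exp (y/2) * Real.exp (y/2) := by
    rw [← Real.exp_add]; ring_nf
  nlinarith [sq_nonneg (y/2 - 1), Real.exp_nonneg (y/2)]

lemma exp_integral_le {β : ℝ} (hβ : 0 < β) :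
    ∫ r in Set.Ioo (0:ℝ) 1, Real.exp (-(β*r)) ≤ β⁻¹ := by
  have h1 : ∫ r in Set.Ioo (0:ℝ) 1, Real.exp (-(β*r)) = ∫ r in (0:ℝ)..1, Real.exp (-β*r) := by
    rw [intervalIntegral.integral_of_le zero_le_one, integral_Ioc_eq_integral_Ioo]
    simp [neg_mul]
  have h2 : (∫ r in (0:ℝ)..1, Real.exp (-β*r)) = (-β)⁻¹ • ∫ x in (-β*0)..(-β*1), Real.exp x :=
    intervalIntegral.integral_comp_mul_left Real.exp (by linarith : -β ≠ 0)
  rw [h1, h2, integral_exp]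
  have h3 : Real.exp (-β*1) ≤ 1 := Real.exp_le_one_iff.mpr (by linarith)
  have h4 : 0 < Real.exp (-β*1) := Real.exp_pos _
  rw [smul_eq_mul, inv_neg]
  have : Real.exp (-β*0) = 1 := by norm_num
  rw [this]
  have hβi : (0:ℝ) ≤ β⁻¹ := by positivity
  nlinarith

lemma sector_abs_le {δ : ℝ} (hδ : δ ∈ Set.Ioo 0 (π/2)) {s : ℂ} (hre : 0 < s.re)
    (harg : Complex.arg s ∈ Set.Ioo (-(π / 2) + δ) (π / 2 - δ)) :
    ‖s‖ * Real.sin δ ≤ s.re := by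
  have hs0 : s ≠ 0 := fun h => by simp [h] at hre
  have habs : 0 < ‖s‖ := norm_pos_iff.mpr hs0
  have hcos : Real.cos (Complex.arg s) = s.re / ‖s‖ := Complex.cos_arg hs0
  have hargabs : |Complex.arg s| ≤ π/2 - δ := by
    rw [abs_le]; constructor <;> [linarith [harg.1]; linarith [harg.2]]
  have h1 : Real.sin δ ≤ Real.cos (Complex.arg s) := by
    rw [← Real.cos_abs, ← Real.cos_pi_div_two_sub δ]
    exact Real.cos_le_cos_of_nonneg_of_le_pi (abs_nonneg _)
      (by linarith [Real.pi_pos, hδ.1]) hargabs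
  rw [hcos] at h1
  calc ‖s‖ * Real.sin δ ≤ ‖s‖ * (s.re / ‖s‖) :=
        mul_le_mul_of_nonneg_left h1 habs.le
    _ = s.re := by field_simp

/-- Tangential-derivative jump estimate at a corner: with `c₁ = cos(ω/2)`, `c₂ = sin(ω/2)`,
`μ > 0`, there is `C = C(ω, μ, δ)` such that for every `s` in the sector `𝒮` (any `σ₀ > 0`)
and every `C¹` function `g : [-1,1] → ℂ`, the radial derivative
`J'(r) = -s μ c₂ e^{-c₂ μ s r}(g(r c₁) - g(-r c₁)) + e^{-c₂ μ s r} c₁ (g'(r c₁) + g'(-r c₁))`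
satisfies `∫₀¹ |J'(r)|² dr ≤ C ∫_{-1}^{1} |g'|²`. -/
theorem corner_tangential_jump_estimate (δ ω μ : ℝ) (hδ : δ ∈ Set.Ioo 0 (π / 2))
    (hω : ω ∈ Set.Ioo 0 (2 * π)) (hμ : 0 < μ) :
    ∃ C : ℝ, 0 < C ∧
      ∀ (σ₀ : ℝ), 0 < σ₀ →
      ∀ (s : ℂ), σ₀ < s.re →
        Complex.arg s ∈ Set.Ioo (-(π / 2) + δ) (π / 2 - δ) →
      ∀ g : ℝ → ℂ, ContDiffOn ℝ 1 g (Set.Icc (-1 : ℝ) 1) →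
      (∫ r in Set.Ioo (0 : ℝ) 1,
          ‖(-s * μ * Real.sin (ω / 2) * Complex.exp (-(Real.sin (ω / 2)) * μ * s * r) *
                (g (r * Real.cos (ω / 2)) - g (-(r * Real.cos (ω / 2)))) +
              Complex.exp (-(Real.sin (ω / 2)) * μ * s * r) * Real.cos (ω / 2) *
                (deriv g (r * Real.cos (ω / 2)) + deriv g (-(r * Real.cos (ω / 2)))))‖ ^ 2) ≤
        C * ∫ τ in Set.Ioo (-1 : ℝ) 1, ‖deriv g τ‖ ^ 2 := by
  have hsδ : 0 < Real.sin δ := Real.sin_pos_of_pos_of_lt_pi hδ.1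
    (lt_trans hδ.2 (by linarith [Real.pi_pos]))
  refine ⟨8 + 2/(Real.sin δ)^2, by positivity, ?_⟩
  intro σ₀ hσ₀ s hs harg g hg
  set k1 : ℝ := Real.cos (ω / 2) with hk1def
  set k2 : ℝ := Real.sin (ω / 2) with hk2def
  have hk2 : 0 < k2 := Real.sin_pos_of_pos_of_lt_pi (by linarith [hω.1]) (by linarith [hω.2])
  have hk1lt : |k1| < 1 := by
    rw [← sq_lt_one_iff_abs_lt_one]
    nlinarith only [Real.sin_sq_add_cos_sq (ω/2), hk2, hk1def, hk2def]
  have ha : 0 < s.re := lt_trans hσ₀ hs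
  have hsabs : ‖s‖ * Real.sin δ ≤ s.re := sector_abs_le hδ ha harg
  set a : ℝ := s.re with hadef
  set E : ℝ := ∫ τ in Set.Ioo (-1:ℝ) 1, ‖(deriv g τ)‖ ^ 2 with hEdef
  have hE0 : 0 ≤ E := by
    rw [hEdef]; exact setIntegral_nonneg measurableSet_Ioo fun x _ => by positivity
  -- facts about g
  have hgc : ContinuousOn (derivWithin g (Set.Icc (-1:ℝ) 1)) (Set.Icc (-1:ℝ) 1) :=
    hg.continuousOn_derivWithin (uniqueDiffOn_Icc (by norm_num)) le_rfl
  have hderiv_eq : ∀ x ∈ Set.Ioo (-1:ℝ) 1, derivWithin g (Set.Icc (-1:ℝ) 1) x = deriv g x :=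
    fun x hx => derivWithin_of_mem_nhds (Icc_mem_nhds hx.1 hx.2)
  have hcont : ContinuousOn (deriv g) (Set.Ioo (-1:ℝ) 1) :=
    (hgc.mono Set.Ioo_subset_Icc_self).congr fun x hx => (hderiv_eq x hx).symm
  obtain ⟨M, hM⟩ := IsCompact.exists_bound_of_continuousOn isCompact_Icc hgc
  have hM0 : 0 ≤ M := le_trans (norm_nonneg _) (hM 0 (by constructor <;> norm_num))
  have hMb : ∀ x ∈ Set.Ioo (-1:ℝ) 1, ‖(deriv g x)‖ ≤ M := by
    intro x hx
    rw [← hderiv_eq x hx]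
    exact hM x (Set.Ioo_subset_Icc_self hx)
  have hHas : ∀ x ∈ Set.Ioo (-1:ℝ) 1, HasDerivAt g (deriv g x) x := fun x hx =>
    ((hg.differentiableOn one_ne_zero).differentiableAt (Icc_mem_nhds hx.1 hx.2)).hasDerivAt
  -- integrability of |g'|^2 on Ioo (-1) 1
  have hf0cont : ContinuousOn (fun τ => ‖(deriv g τ)‖ ^ 2) (Set.Ioo (-1:ℝ) 1) :=
    (continuous_norm.comp_continuousOn hcont).pow 2
  have hfi : IntegrableOn (fun τ => ‖(deriv g τ)‖ ^ 2) (Set.Ioo (-1:ℝ) 1) := by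
    refine Integrable.mono' (integrable_const (M^2))
      (hf0cont.aestronglyMeasurable measurableSet_Ioo) ?_
    refine (ae_restrict_iff' measurableSet_Ioo).mpr (Filter.Eventually.of_forall fun x hx => ?_)
    rw [Real.norm_eq_abs, _root_.abs_of_nonneg (by positivity)]
    exact pow_le_pow_left₀ (norm_nonneg _) (hMb x hx) 2
  rcases eq_or_ne k1 0 with hk10 | hk1
  · -- degenerate case: cos(ω/2) = 0, integrand vanishes
    have : ∀ r : ℝ, ‖(-s * μ * k2 * Complex.exp (-(k2:ℂ) * μ * s * r) *
                (g (r * k1) - g (-(r * k1))) +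
              Complex.exp (-(k2:ℂ) * μ * s * r) * k1 *
                (deriv g (r * k1) + deriv g (-(r * k1))))‖ ^ 2 = 0 := by
      intro r; simp [hk10]
    rw [show (∫ r in Set.Ioo (0 : ℝ) 1,
          ‖(-s * μ * k2 * Complex.exp (-(k2:ℂ) * μ * s * r) *
                (g (r * k1) - g (-(r * k1))) +
              Complex.exp (-(k2:ℂ) * μ * s * r) * k1 *
                (deriv g (r * k1) + deriv g (-(r * k1))))‖ ^ 2) = 0 by
      simp only [this]; exact integral_zero _ _]
    positivity
  set k : ℝ := |k1| with hkdef
  have hk : 0 < k := abs_pos.mpr hk1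
  have hk1' : k < 1 := hk1lt
  clear_value E a
  set β : ℝ := k2 * μ * a with hβdef
  have hβ : 0 < β := by rw [hβdef]; exact mul_pos (mul_pos hk2 hμ) ha
  set K1 : ℝ := 2*μ*k2*a*k*E/(Real.sin δ)^2 with hK1def
  have hK10 : 0 ≤ K1 := by
    rw [hK1def]
    apply div_nonneg _ (sq_nonneg _)
    have h2μ : (0:ℝ) ≤ 2*μ := by linarith
    exact mul_nonneg (mul_nonneg (mul_nonneg (mul_nonneg h2μ hk2.le) ha.le) hk.le) hE0
  clear_value β K1
  -- the jump bound
  have hjump : ∀ r ∈ Set.Ioo (0:ℝ) 1,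
      ‖(g (r * k1) - g (-(r * k1)))‖ ^ 2 ≤ 2*r*k*E := by
    intro r hr
    obtain ⟨hr0, hr1⟩ := hr
    have hrk : r * k < 1 := by
      have := mul_lt_mul_of_pos_left hk1' hr0
      rw [mul_one] at this
      linarith only [this, hr1]
    have hrk0 : 0 < r * k := mul_pos hr0 hk
    set b : ℝ := r * k1 with hbdef
    have hbabs : |b| = r * k := by rw [hbdef, abs_mul, abs_of_pos hr0]
    have hsub : Set.uIcc (-b) b ⊆ Set.Ioo (-1:ℝ) 1 := by
      intro x hx
      rw [Set.mem_uIcc] at hx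
      have h1 := le_abs_self b; have h2 := neg_abs_le b
      constructor <;> rcases hx with ⟨hxa, hxb⟩ | ⟨hxa, hxb⟩ <;>
        simp only [hbabs] at h1 h2 <;> linarith only [h1, h2, hrk, hxa, hxb]
    have hint : IntervalIntegrable (deriv g) volume (-b) b :=
      (hcont.mono hsub).intervalIntegrable
    have heq : g b - g (-b) = ∫ x in (-b)..b, deriv g x :=
      (intervalIntegral.integral_eq_sub_of_hasDerivAt
        (fun x hx => hHas x (hsub hx)) hint).symm
    have habs1 : ‖(g b - g (-b))‖ ≤ |∫ x in (-b)..b, ‖(deriv g x)‖| := by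
      rw [heq]
      have := intervalIntegral.norm_integral_le_abs_integral_norm
        (f := deriv g) (a := -b) (b := b) (μ := volume)
      simpa using this
    have hswap : |∫ x in (-b)..b, ‖(deriv g x)‖|
        = |∫ x in (-(r*k))..(r*k), ‖(deriv g x)‖| := by
      rcases abs_choice k1 with hc | hc
      · have hbk : b = r * k := by rw [hbdef, hkdef, hc]
        rw [hbk]
      · have hbk : b = -(r*k) := by rw [hbdef, hkdef, hc]; ring
        rw [hbk, neg_neg, intervalIntegral.integral_symm, abs_neg]
    have hIoc : |∫ x in (-(r*k))..(r*k), ‖(deriv g x)‖|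
        = ∫ x in Set.Ioc (-(r*k)) (r*k), ‖(deriv g x)‖ := by
      rw [intervalIntegral.integral_of_le (by linarith only [hrk0]), _root_.abs_of_nonneg]
      exact setIntegral_nonneg measurableSet_Ioc fun x _ => norm_nonneg _
    have hIocsub : Set.Ioc (-(r*k)) (r*k) ⊆ Set.Ioo (-1:ℝ) 1 := by
      intro x hx
      exact ⟨lt_of_le_of_lt (by linarith only [hrk]) hx.1, lt_of_le_of_lt hx.2 hrk⟩
    haveI : IsFiniteMeasure (volume.restrict (Set.Ioc (-(r*k)) (r*k))) :=
      ⟨by rw [Measure.restrict_apply_univ]; exact measure_Ioc_lt_top⟩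
    have hmemlp : MemLp (fun x => ‖(deriv g x)‖) 2
        (volume.restrict (Set.Ioc (-(r*k)) (r*k))) := by
      refine MemLp.of_bound ((continuous_norm.comp_continuousOn
        (hcont.mono hIocsub)).aestronglyMeasurable measurableSet_Ioc) M ?_
      refine (ae_restrict_iff' measurableSet_Ioc).mpr (Filter.Eventually.of_forall fun x hx => ?_)
      rw [Real.norm_eq_abs, _root_.abs_of_nonneg (norm_nonneg _)]
      exact hMb x (hIocsub hx)
    have hcs := sq_integral_le_meas_mul_integral_sq
      (μ := volume.restrict (Set.Ioc (-(r*k)) (r*k)))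
      (f := fun x => ‖(deriv g x)‖)
      (Filter.Eventually.of_forall fun x => norm_nonneg _) hmemlp
    have hmeasI : ((volume.restrict (Set.Ioc (-(r*k)) (r*k))) Set.univ).toReal = 2*(r*k) := by
      rw [Measure.restrict_apply_univ, Real.volume_Ioc, ENNReal.toReal_ofReal (by linarith only [hrk0])]
      ring
    have hsubint : ∫ x in Set.Ioc (-(r*k)) (r*k), ‖(deriv g x)‖ ^ 2 ≤ E := by
      rw [hEdef]
      exact setIntegral_mono_set hfi
        (Filter.Eventually.of_forall fun x => by positivity)
        (HasSubset.Subset.eventuallyLE hIocsub)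
    have hfin : ‖(g b - g (-b))‖ ^ 2
        ≤ (∫ x in Set.Ioc (-(r*k)) (r*k), ‖(deriv g x)‖) ^ 2 := by
      apply pow_le_pow_left₀ (norm_nonneg _)
      calc ‖(g b - g (-b))‖ ≤ |∫ x in (-b)..b, ‖(deriv g x)‖| := habs1
        _ = ∫ x in Set.Ioc (-(r*k)) (r*k), ‖(deriv g x)‖ := by rw [hswap, hIoc]
    have hIntnn : 0 ≤ ∫ x in Set.Ioc (-(r*k)) (r*k), ‖(deriv g x)‖ ^ 2 :=
      setIntegral_nonneg measurableSet_Ioc fun x _ => by positivity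
    calc ‖(g (r*k1) - g (-(r*k1)))‖ ^ 2 = ‖(g b - g (-b))‖ ^ 2 := by
          rw [hbdef]
      _ ≤ (∫ x in Set.Ioc (-(r*k)) (r*k), ‖(deriv g x)‖) ^ 2 := hfin
      _ ≤ 2*(r*k) * ∫ x in Set.Ioc (-(r*k)) (r*k), ‖(deriv g x)‖ ^ 2 := by
          rw [← hmeasI]; exact hcs
      _ ≤ 2*(r*k) * E := mul_le_mul_of_nonneg_left hsubint (by positivity)
      _ = 2*r*k*E := by ring
  -- pointwise domination
  set Φ : ℝ → ℝ := fun r => K1 * Real.exp (-(β*r)) +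
    4*k1^2 * (‖(deriv g (r*k1))‖ ^ 2 + ‖(deriv g (-(r*k1)))‖ ^ 2) with hΦdef
  have hzre : ∀ r : ℝ, ((-(k2:ℂ) * μ * s * r).re) = -(β*r) := by
    intro r
    simp [Complex.mul_re, Complex.mul_im, hβdef, hadef]
    try ring
  have habsexp : ∀ r : ℝ, ‖(Complex.exp (-(k2:ℂ) * μ * s * r))‖ = Real.exp (-(β*r)) := by
    intro r; rw [Complex.norm_exp, hzre r]
  have hpoint : ∀ r ∈ Set.Ioo (0:ℝ) 1,
      ‖(-s * μ * k2 * Complex.exp (-(k2:ℂ) * μ * s * r) *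
                (g (r * k1) - g (-(r * k1))) +
              Complex.exp (-(k2:ℂ) * μ * s * r) * k1 *
                (deriv g (r * k1) + deriv g (-(r * k1))))‖ ^ 2 ≤ Φ r := by
    intro r hr
    obtain ⟨hr0, hr1⟩ := hr
    set e1 : ℝ := Real.exp (-(β*r)) with he1def
    have he1pos : 0 < e1 := Real.exp_pos _
    have he1le : e1 ≤ 1 := Real.exp_le_one_iff.mpr (by nlinarith only [mul_pos hβ hr0])
    set X : ℂ := -s * μ * k2 * Complex.exp (-(k2:ℂ) * μ * s * r) * (g (r * k1) - g (-(r * k1)))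
      with hXdef
    set Y : ℂ := Complex.exp (-(k2:ℂ) * μ * s * r) * k1 *
      (deriv g (r * k1) + deriv g (-(r * k1))) with hYdef
    set G : ℝ := ‖(g (r * k1) - g (-(r * k1)))‖ with hGdef
    set P : ℝ := ‖(deriv g (r * k1))‖ with hPdef
    set Q : ℝ := ‖(deriv g (-(r * k1)))‖ with hQdef
    have habsX : ‖X‖ = ‖s‖ * μ * k2 * e1 * G := by
      rw [hXdef]
      simp only [norm_mul, norm_neg, Complex.norm_real, Real.norm_eq_abs, habsexp r, he1def, hGdef]
      rw [abs_of_pos hμ, abs_of_pos hk2]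
    have habsY : ‖Y‖ = e1 * k * ‖(deriv g (r * k1) + deriv g (-(r * k1)))‖ := by
      rw [hYdef]
      simp only [norm_mul, Complex.norm_real, Real.norm_eq_abs, habsexp r, he1def, hkdef]
    have hA : ‖s‖ ≤ a / Real.sin δ := by
      rw [le_div_iff₀ hsδ]; exact hsabs
    have hA0 : 0 ≤ ‖s‖ := norm_nonneg _
    -- 2βr * e1^2 ≤ e1
    have hkey : 2*(β*r) * e1^2 ≤ e1 := by
      have h1 : 2*(β*r) ≤ Real.exp (β*r) := two_mul_le_exp (le_of_lt (mul_pos hβ hr0))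
      have h2 : Real.exp (β*r) * e1 = 1 := by
        rw [he1def, ← Real.exp_add]; simp
      calc 2*(β*r) * e1^2 ≤ Real.exp (β*r) * e1^2 :=
            mul_le_mul_of_nonneg_right h1 (sq_nonneg e1)
        _ = e1 := by rw [pow_two, ← mul_assoc, h2, one_mul]
    have hG2 : G^2 ≤ 2*r*k*E := hjump r ⟨hr0, hr1⟩
    have hX2 : 2 * ‖X‖ ^ 2 ≤ K1 * e1 := by
      rw [habsX]
      have hstep1 : (‖s‖ * μ * k2 * e1 * G)^2
          ≤ (‖s‖)^2 * μ^2 * k2^2 * e1^2 * (2*r*k*E) := by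
        have : (‖s‖ * μ * k2 * e1 * G)^2
            = (‖s‖)^2 * μ^2 * k2^2 * e1^2 * G^2 := by ring
        rw [this]
        refine mul_le_mul_of_nonneg_left hG2 ?_
        have := sq_nonneg (‖s‖ * μ * k2 * e1)
        calc (0:ℝ) ≤ (‖s‖ * μ * k2 * e1)^2 := this
          _ = (‖s‖)^2 * μ^2 * k2^2 * e1^2 := by ring
      have hstep2 : (‖s‖)^2 * μ^2 * k2^2 * e1^2 * (2*r*k*E)
          ≤ (a/Real.sin δ)^2 * μ^2 * k2^2 * e1^2 * (2*r*k*E) := by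
        have hApow : (‖s‖)^2 ≤ (a/Real.sin δ)^2 := pow_le_pow_left₀ hA0 hA 2
        have h2rkE : (0:ℝ) ≤ 2*r*k*E :=
          mul_nonneg (mul_nonneg (by linarith only [hr0]) hk.le) hE0
        exact mul_le_mul_of_nonneg_right (mul_le_mul_of_nonneg_right
          (mul_le_mul_of_nonneg_right (mul_le_mul_of_nonneg_right hApow (sq_nonneg μ))
            (sq_nonneg k2)) (sq_nonneg e1)) h2rkE
      have hstep3 : 2 * ((a/Real.sin δ)^2 * μ^2 * k2^2 * e1^2 * (2*r*k*E))
          = K1 * (2*(β*r)*e1^2) := by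
        rw [hK1def, hβdef]
        field_simp [hsδ.ne']
      calc 2 * (‖s‖ * μ * k2 * e1 * G)^2
          ≤ 2 * ((a/Real.sin δ)^2 * μ^2 * k2^2 * e1^2 * (2*r*k*E)) := by
            linarith only [hstep1, hstep2]
        _ = K1 * (2*(β*r)*e1^2) := hstep3
        _ ≤ K1 * e1 := mul_le_mul_of_nonneg_left hkey hK10
    have hY2 : 2 * ‖Y‖ ^ 2 ≤ 4*k1^2 * (P^2 + Q^2) := by
      rw [habsY]
      have hPQ : ‖(deriv g (r * k1) + deriv g (-(r * k1)))‖ ≤ P + Q := by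
        rw [hPdef, hQdef]; exact norm_add_le _ _
      have hPQ0 : 0 ≤ ‖(deriv g (r * k1) + deriv g (-(r * k1)))‖ :=
        norm_nonneg _
      have h1 : (e1 * k * ‖(deriv g (r * k1) + deriv g (-(r * k1)))‖)^2
          ≤ k^2 * (P+Q)^2 := by
        have he1k : e1 * k ≤ 1 * k := mul_le_mul_of_nonneg_right he1le hk.le
        have h0 : 0 ≤ e1 * k := by positivity
        have hle : e1 * k * ‖(deriv g (r * k1) + deriv g (-(r * k1)))‖ ≤ k * (P + Q) := by
          calc e1 * k * ‖(deriv g (r * k1) + deriv g (-(r * k1)))‖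
              ≤ e1 * k * (P + Q) := mul_le_mul_of_nonneg_left hPQ h0
            _ ≤ 1 * k * (P + Q) := by
                have hPQnn : 0 ≤ P + Q := by rw [hPdef, hQdef]; positivity
                exact mul_le_mul_of_nonneg_right he1k hPQnn
            _ = k * (P + Q) := by ring
        calc (e1 * k * ‖(deriv g (r * k1) + deriv g (-(r * k1)))‖)^2
            ≤ (k * (P+Q))^2 := pow_le_pow_left₀ (by positivity) hle 2
          _ = k^2 * (P+Q)^2 := by ring
      have hk2eq : k^2 = k1^2 := sq_abs k1
      nlinarith only [sq_nonneg (P - Q), h1, hk2eq, sq_nonneg (P + Q)]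
    calc ‖(X + Y)‖ ^ 2 ≤ (‖X‖ + ‖Y‖)^2 :=
          pow_le_pow_left₀ (norm_nonneg _) (norm_add_le _ _) 2
      _ ≤ 2 * ‖X‖ ^ 2 + 2 * ‖Y‖ ^ 2 := by
          nlinarith only [sq_nonneg (‖X‖ - ‖Y‖)]
      _ ≤ K1 * e1 + 4*k1^2 * (P^2 + Q^2) := by linarith only [hX2, hY2]
      _ = Φ r := by rw [hΦdef]
  -- integrability of Φ on Ioo 0 1
  haveI : IsFiniteMeasure (volume.restrict (Set.Ioo (0:ℝ) 1)) :=
    ⟨by rw [Measure.restrict_apply_univ]; exact measure_Ioo_lt_top⟩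
  have hmaps : ∀ c : ℝ, |c| < 1 → ∀ r ∈ Set.Ioo (0:ℝ) 1, r * c ∈ Set.Ioo (-1:ℝ) 1 := by
    intro c hc r hr
    have h1 : |r * c| < 1 := by
      rw [abs_mul, abs_of_pos hr.1]
      nlinarith only [abs_nonneg c, hr.1, hr.2, hc]
    exact ⟨neg_lt_of_abs_lt h1, lt_of_abs_lt h1⟩
  have hcompint : ∀ c : ℝ, |c| < 1 →
      IntegrableOn (fun r => ‖(deriv g (r * c))‖ ^ 2) (Set.Ioo (0:ℝ) 1) := by
    intro c hc
    have hcontc : ContinuousOn (fun r => ‖(deriv g (r * c))‖ ^ 2) (Set.Ioo (0:ℝ) 1) := by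
      apply ContinuousOn.pow
      apply continuous_norm.comp_continuousOn
      exact hcont.comp ((continuous_mul_right c).continuousOn) (hmaps c hc)
    refine Integrable.mono' (integrable_const (M^2))
      (hcontc.aestronglyMeasurable measurableSet_Ioo) ?_
    refine (ae_restrict_iff' measurableSet_Ioo).mpr (Filter.Eventually.of_forall fun x hx => ?_)
    rw [Real.norm_eq_abs, _root_.abs_of_nonneg (by positivity)]
    exact pow_le_pow_left₀ (norm_nonneg _) (hMb _ (hmaps c hc x hx)) 2
  have hexpint : IntegrableOn (fun r => K1 * Real.exp (-(β*r))) (Set.Ioo (0:ℝ) 1) := by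
    apply Integrable.const_mul
    apply (Continuous.integrableOn_Icc (by continuity)).mono_set Set.Ioo_subset_Icc_self
  have hint2a : IntegrableOn (fun r => ‖(deriv g (r * k1))‖ ^ 2) (Set.Ioo (0:ℝ) 1) :=
    hcompint k1 hk1lt
  have hint2b : IntegrableOn (fun r => ‖(deriv g (-(r * k1)))‖ ^ 2)
      (Set.Ioo (0:ℝ) 1) := by
    have := hcompint (-k1) (by rwa [abs_neg])
    refine this.congr_fun (fun x _ => ?_) measurableSet_Ioo
    dsimp only
    rw [show x * -k1 = -(x * k1) by ring]
  have hI2 : IntegrableOn (fun r => 4*k1^2 * (‖(deriv g (r * k1))‖ ^ 2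
      + ‖(deriv g (-(r * k1)))‖ ^ 2)) (Set.Ioo (0:ℝ) 1) := by
    have := (hint2a.add hint2b).const_mul (4*k1^2)
    exact this
  have hΦint : IntegrableOn Φ (Set.Ioo (0:ℝ) 1) := by
    rw [hΦdef]
    exact hexpint.add hI2
  -- compare integrals
  have hmono : (∫ r in Set.Ioo (0 : ℝ) 1,
          ‖(-s * μ * k2 * Complex.exp (-(k2:ℂ) * μ * s * r) *
                (g (r * k1) - g (-(r * k1))) +
              Complex.exp (-(k2:ℂ) * μ * s * r) * k1 *
                (deriv g (r * k1) + deriv g (-(r * k1))))‖ ^ 2)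
      ≤ ∫ r in Set.Ioo (0:ℝ) 1, Φ r := by
    apply integral_mono_of_nonneg
    · exact Filter.Eventually.of_forall fun r => by positivity
    · exact hΦint
    · exact (ae_restrict_iff' measurableSet_Ioo).mpr (Filter.Eventually.of_forall hpoint)
  have hΦsplit : ∫ r in Set.Ioo (0:ℝ) 1, Φ r
      = K1 * (∫ r in Set.Ioo (0:ℝ) 1, Real.exp (-(β*r)))
        + 4*k1^2 * ((∫ r in Set.Ioo (0:ℝ) 1, ‖(deriv g (r * k1))‖ ^ 2)
          + (∫ r in Set.Ioo (0:ℝ) 1, ‖(deriv g (-(r * k1)))‖ ^ 2)) := by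
    rw [hΦdef]
    rw [integral_add hexpint hI2, integral_const_mul, integral_const_mul,
      integral_add hint2a hint2b]
  have hbound1 : K1 * (∫ r in Set.Ioo (0:ℝ) 1, Real.exp (-(β*r))) ≤ 2*k*E/(Real.sin δ)^2 := by
    have h1 : K1 * (∫ r in Set.Ioo (0:ℝ) 1, Real.exp (-(β*r))) ≤ K1 * β⁻¹ :=
      mul_le_mul_of_nonneg_left (exp_integral_le hβ) hK10
    have h2 : K1 * β⁻¹ = 2*k*E/(Real.sin δ)^2 := by
      rw [hK1def, hβdef]
      field_simp [hsδ.ne', hk2.ne', hμ.ne', ha.ne']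
    linarith only [h1, h2]
  have hbound2a : (∫ r in Set.Ioo (0:ℝ) 1, ‖(deriv g (r * k1))‖ ^ 2) ≤ k⁻¹ * E := by
    rw [hEdef]
    exact scaled_integral_le (fun x => by positivity) hfi hk1 hk1lt
  have hbound2b : (∫ r in Set.Ioo (0:ℝ) 1, ‖(deriv g (-(r * k1)))‖ ^ 2) ≤ k⁻¹ * E := by
    rw [hEdef]
    have h1 : (∫ r in Set.Ioo (0:ℝ) 1, ‖(deriv g (-(r * k1)))‖ ^ 2)
        = ∫ r in Set.Ioo (0:ℝ) 1, ‖(deriv g (r * (-k1)))‖ ^ 2 := by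
      refine setIntegral_congr_fun measurableSet_Ioo fun x _ => ?_
      rw [show x * -k1 = -(x * k1) by ring]
    rw [h1]
    have := scaled_integral_le (f := fun τ => ‖(deriv g τ)‖ ^ 2)
      (fun x => by positivity) hfi (neg_ne_zero.mpr hk1) (by rwa [abs_neg])
    rwa [abs_neg] at this
  have hfinal : ∫ r in Set.Ioo (0:ℝ) 1, Φ r ≤ (8 + 2/(Real.sin δ)^2) * E := by
    rw [hΦsplit]
    have hk1sq : k1^2 = k^2 := (_root_.sq_abs k1).symm
    have h2 : 4*k1^2 * ((∫ r in Set.Ioo (0:ℝ) 1, ‖(deriv g (r * k1))‖ ^ 2)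
          + (∫ r in Set.Ioo (0:ℝ) 1, ‖(deriv g (-(r * k1)))‖ ^ 2))
        ≤ 4*k1^2 * (k⁻¹ * E + k⁻¹ * E) := by
      apply mul_le_mul_of_nonneg_left (by linarith only [hbound2a, hbound2b]) (by positivity)
    have h3 : 4*k1^2 * (k⁻¹ * E + k⁻¹ * E) = 8*k*E := by
      rw [hk1sq]
      field_simp
      ring
    have h4 : 2*k*E/(Real.sin δ)^2 ≤ 2*E/(Real.sin δ)^2 := by
      apply div_le_div_of_nonneg_right ?_ (by positivity)
      nlinarith only [mul_nonneg (sub_nonneg.mpr hk1'.le) hE0]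
    have h5 : 8*k*E ≤ 8*E := by
      nlinarith only [mul_nonneg (sub_nonneg.mpr hk1'.le) hE0]
    have := hbound1
    calc K1 * (∫ r in Set.Ioo (0:ℝ) 1, Real.exp (-(β*r)))
        + 4*k1^2 * ((∫ r in Set.Ioo (0:ℝ) 1, ‖(deriv g (r * k1))‖ ^ 2)
          + (∫ r in Set.Ioo (0:ℝ) 1, ‖(deriv g (-(r * k1)))‖ ^ 2))
        ≤ 2*k*E/(Real.sin δ)^2 + 8*k*E := by
          rw [← h3]; linarith only [h2, hbound1]
      _ ≤ 2*E/(Real.sin δ)^2 + 8*E := by linarith only [h4, h5]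
      _ = (8 + 2/(Real.sin δ)^2) * E := by ring
  calc (∫ r in Set.Ioo (0 : ℝ) 1,
          ‖(-s * μ * k2 * Complex.exp (-(k2:ℂ) * μ * s * r) *
                (g (r * k1) - g (-(r * k1))) +
              Complex.exp (-(k2:ℂ) * μ * s * r) * k1 *
                (deriv g (r * k1) + deriv g (-(r * k1))))‖ ^ 2)
      ≤ ∫ r in Set.Ioo (0:ℝ) 1, Φ r := hmono
    _ ≤ (8 + 2/(Real.sin δ)^2) * E := hfinal
end
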